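/- arXiv:1609.03401 — 12 statements merged into one kernel-verified Lean document; each statement's English description precedes it below -/
import Mathlib

section
/- If α, β, γ, δ are nonzero elements of a finite field F_q with α + β = γ + δ, and a₁, a₂, a₃, a₄ are nonzero elements of F_q satisfying αa₁ + βa₂ = γa₃ + δa₄ and αa₁² + βa₂² = γa₃² + δa₄², then αβ(a₁ - a₂)² = γδ(a₃ - a₄)². -/
theorem stmt_0 {F : Type*} [Field F] [Fintype F]
    (α β γ δ a₁ a₂ a₃ a₄ : F)
    (hα : α ≠ 0) (hβ : β ≠ 0) (hγ : γ ≠ 0) (hδ : δ ≠ 0)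
    (ha₁ : a₁ ≠ 0) (ha₂ : a₂ ≠ 0) (ha₃ : a₃ ≠ 0) (ha₄ : a₄ ≠ 0)
    (hsum : α + β = γ + δ)
    (h1 : α * a₁ + β * a₂ = γ * a₃ + δ * a₄)
    (h2 : α * a₁ ^ 2 + β * a₂ ^ 2 = γ * a₃ ^ 2 + δ * a₄ ^ 2) :
    α * β * (a₁ - a₂) ^ 2 = γ * δ * (a₃ - a₄) ^ 2 := by
  linear_combination (γ * a₃ ^ 2 + δ * a₄ ^ 2) * hsum + (α + β) * h2 -
    (α * a₁ + β * a₂ + γ * a₃ + δ * a₄) * h1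
end

section
/- Let α, β, γ be three distinct elements of a field and let a₁, a₂, a₃ be nonzero elements of the field. If 0 = α(a₂ - a₁) + β(a₃ - a₂) + γ(a₁ - a₃) and 0 = α(a₂² - a₁²) + β(a₃² - a₂²) + γ(a₁² - a₃²), then a₁ = a₂ = a₃. -/
theorem stmt_2 {F : Type*} [Field F]
    (α β γ a₁ a₂ a₃ : F)
    (hαβ : α ≠ β) (hβγ : β ≠ γ) (hαγ : α ≠ γ)
    (ha₁ : a₁ ≠ 0) (ha₂ : a₂ ≠ 0) (ha₃ : a₃ ≠ 0)
    (h1 : 0 = α * (a₂ - a₁) + β * (a₃ - a₂) + γ * (a₁ - a₃))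
    (h2 : 0 = α * (a₂ ^ 2 - a₁ ^ 2) + β * (a₃ ^ 2 - a₂ ^ 2) + γ * (a₁ ^ 2 - a₃ ^ 2)) :
    a₁ = a₂ ∧ a₂ = a₃ := by
  have hαγ' : α - γ ≠ 0 := sub_ne_zero.mpr hαγ
  have hβγ' : β - γ ≠ 0 := sub_ne_zero.mpr hβγ
  have hαβ' : α - β ≠ 0 := sub_ne_zero.mpr hαβ
  have h12 : a₁ = a₂ := by
    by_contra h
    have hx : a₂ - a₁ ≠ 0 := sub_ne_zero.mpr (Ne.symm h)
    have h23 : a₃ - a₂ ≠ 0 := by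
      intro hy
      have : (α - γ) * (a₂ - a₁) = 0 := by linear_combination -h1 - (β - γ) * hy
      exact mul_ne_zero hαγ' hx this
    have key : (α - γ) * (a₂ - a₁) * (a₁ - a₃) = 0 := by
      linear_combination -h2 + (a₃ + a₂) * h1
    have h13 : a₁ - a₃ = 0 := by
      rcases mul_eq_zero.mp key with hk | hk
      · exact absurd hk (mul_ne_zero hαγ' hx)
      · exact hk
    have : (α - β) * (a₂ - a₁) = 0 := by linear_combination -h1 + (β - γ) * h13
    exact mul_ne_zero hαβ' hx this
  refine ⟨h12, ?_⟩
  have : (β - γ) * (a₃ - a₂) = 0 := by linear_combination -h1 - (α - γ) * congrArg (· - a₂) h12.symm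
  have := (mul_eq_zero.mp this).resolve_left hβγ'
  exact (sub_eq_zero.mp this).symm
end

section
/- Let F_q be a finite field of odd order, let α₁, …, α_r be distinct elements of F_q, and let m₁, …, m_l be distinct nonzero elements of F_q. Define the r-uniform hypergraph H on vertex set F_q × F_q × {1,…,r} whose edges are e(x, y, a, m_s) = { (x + α_i·(m_s·a), y + α_i·(m_s·a²), i) : 1 ≤ i ≤ r } for x, y ∈ F_q, a ∈ F_q \ {0}, 1 ≤ s ≤ l. Then H is linear: any two distinct edges of H share at most one vertex. -/
/-- The edge `e(x, y, a, mₛ)` of the hypergraph `H` constructed by Timmons. -/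
def timEdge {F : Type*} [Field F] [DecidableEq F] {r l : ℕ}
    (α : Fin r → F) (m : Fin l → F) (x y a : F) (s : Fin l) :
    Finset (F × F × Fin r) :=
  Finset.univ.image (fun i => (x + α i * (m s * a), y + α i * (m s * a ^ 2), i))

/-- The hypergraph `H` is linear: any two distinct edges share at most one vertex. -/
theorem stmt_4 {F : Type*} [Field F] [Fintype F] [DecidableEq F]
    (hodd : Odd (Fintype.card F)) {r l : ℕ}
    (α : Fin r → F) (m : Fin l → F)
    (hα : Function.Injective α) (hm : Function.Injective m) (hm0 : ∀ s, m s ≠ 0)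
    (x₁ y₁ a₁ : F) (s₁ : Fin l) (x₂ y₂ a₂ : F) (s₂ : Fin l)
    (ha₁ : a₁ ≠ 0) (ha₂ : a₂ ≠ 0)
    (hne : timEdge α m x₁ y₁ a₁ s₁ ≠ timEdge α m x₂ y₂ a₂ s₂) :
    (timEdge α m x₁ y₁ a₁ s₁ ∩ timEdge α m x₂ y₂ a₂ s₂).card ≤ 1 := by
  by_contra h
  push_neg at h
  obtain ⟨p, hp, q, hq, hpq⟩ := Finset.one_lt_card.mp h
  simp only [Finset.mem_inter, timEdge, Finset.mem_image, Finset.mem_univ, true_and] at hp hq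
  obtain ⟨⟨i, hi⟩, ⟨i', hi'⟩⟩ := hp
  obtain ⟨⟨j, hj⟩, ⟨j', hj'⟩⟩ := hq
  -- third components force i = i', j = j'
  have hii : i = i' := by
    have := congrArg (fun z : F × F × Fin r => z.2.2) (hi.trans hi'.symm)
    simpa using this
  have hjj : j = j' := by
    have := congrArg (fun z : F × F × Fin r => z.2.2) (hj.trans hj'.symm)
    simpa using this
  subst hii hjj
  have hij : i ≠ j := fun hh => hpq (hi.symm.trans (hh ▸ hj))
  have e1 : x₁ + α i * (m s₁ * a₁) = x₂ + α i * (m s₂ * a₂) := by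
    have := congrArg (fun z : F × F × Fin r => z.1) (hi.trans hi'.symm)
    simpa using this
  have e2 : y₁ + α i * (m s₁ * a₁ ^ 2) = y₂ + α i * (m s₂ * a₂ ^ 2) := by
    have := congrArg (fun z : F × F × Fin r => z.2.1) (hi.trans hi'.symm)
    simpa using this
  have e3 : x₁ + α j * (m s₁ * a₁) = x₂ + α j * (m s₂ * a₂) := by
    have := congrArg (fun z : F × F × Fin r => z.1) (hj.trans hj'.symm)
    simpa using this
  have e4 : y₁ + α j * (m s₁ * a₁ ^ 2) = y₂ + α j * (m s₂ * a₂ ^ 2) := by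
    have := congrArg (fun z : F × F × Fin r => z.2.1) (hj.trans hj'.symm)
    simpa using this
  have hαij : α i - α j ≠ 0 := sub_ne_zero.mpr (fun hh => hij (hα hh))
  have c1 : m s₁ * a₁ = m s₂ * a₂ := by
    have : (α i - α j) * (m s₁ * a₁ - m s₂ * a₂) = 0 := by ring_nf; linear_combination e1 - e3
    rcases mul_eq_zero.mp this with h' | h'
    · exact absurd h' hαij
    · exact sub_eq_zero.mp h'
  have c2 : m s₁ * a₁ ^ 2 = m s₂ * a₂ ^ 2 := by
    have : (α i - α j) * (m s₁ * a₁ ^ 2 - m s₂ * a₂ ^ 2) = 0 := by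
      ring_nf; linear_combination e2 - e4
    rcases mul_eq_zero.mp this with h' | h'
    · exact absurd h' hαij
    · exact sub_eq_zero.mp h'
  have hc1ne : m s₁ * a₁ ≠ 0 := mul_ne_zero (hm0 s₁) ha₁
  have ha : a₁ = a₂ := by
    have : m s₁ * a₁ * a₁ = m s₁ * a₁ * a₂ := by
      calc m s₁ * a₁ * a₁ = m s₁ * a₁ ^ 2 := by ring
      _ = m s₂ * a₂ ^ 2 := c2
      _ = m s₂ * a₂ * a₂ := by ring
      _ = m s₁ * a₁ * a₂ := by rw [← c1]
    exact mul_left_cancel₀ hc1ne this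
  subst ha
  have hs : s₁ = s₂ := hm (mul_right_cancel₀ ha₁ c1)
  subst hs
  have hx : x₁ = x₂ := by linear_combination e1
  have hy : y₁ = y₂ := by linear_combination e2
  exact hne (by rw [hx, hy])
end

section
/- With the hypergraph H defined from distinct α₁, …, α_r ∈ F_q and a single nonzero multiplier m₁ (i.e., l = 1), if three distinct edges e(x₁,y₁,a₁,m₁), e(x₂,y₂,a₂,m₁), e(x₃,y₃,a₃,m₁) pairwise intersect in vertices lying in three distinct parts V_i, V_j, V_k (with i, j, k distinct), then the edges coincide — that is, H contains no Berge triangle of this form. Equivalently: if x₁ + α_i m₁ a₁ = x₂ + α_i m₁ a₂, y₁ + α_i m₁ a₁² = y₂ + α_i m₁ a₂², x₂ + α_j m₁ a₂ = x₃ + α_j m₁ a₃, y₂ + α_j m₁ a₂² = y₃ + α_j m₁ a₃², x₃ + α_k m₁ a₃ = x₁ + α_k m₁ a₁, and y₃ + α_k m₁ a₃² = y₁ + α_k m₁ a₁², with a₁, a₂, a₃ nonzero and α_i, α_j, α_k distinct, then (x₁,y₁,a₁) = (x₂,y₂,a₂) = (x₃,y₃,a₃). -/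
theorem stmt_5 {F : Type*} [Field F] [Fintype F]
    (hodd : Odd (Fintype.card F))
    (αi αj αk m₁ : F)
    (hij : αi ≠ αj) (hjk : αj ≠ αk) (hik : αi ≠ αk) (hm : m₁ ≠ 0)
    (x₁ y₁ a₁ x₂ y₂ a₂ x₃ y₃ a₃ : F)
    (ha₁ : a₁ ≠ 0) (ha₂ : a₂ ≠ 0) (ha₃ : a₃ ≠ 0)
    (e1x : x₁ + αi * m₁ * a₁ = x₂ + αi * m₁ * a₂)
    (e1y : y₁ + αi * m₁ * a₁ ^ 2 = y₂ + αi * m₁ * a₂ ^ 2)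
    (e2x : x₂ + αj * m₁ * a₂ = x₃ + αj * m₁ * a₃)
    (e2y : y₂ + αj * m₁ * a₂ ^ 2 = y₃ + αj * m₁ * a₃ ^ 2)
    (e3x : x₃ + αk * m₁ * a₃ = x₁ + αk * m₁ * a₁)
    (e3y : y₃ + αk * m₁ * a₃ ^ 2 = y₁ + αk * m₁ * a₁ ^ 2) :
    (x₁, y₁, a₁) = (x₂, y₂, a₂) ∧ (x₂, y₂, a₂) = (x₃, y₃, a₃) := by
  have h1m : m₁ * (αi * (a₂ - a₁) + αj * (a₃ - a₂) + αk * (a₁ - a₃)) = m₁ * 0 := by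
    linear_combination -e1x - e2x - e3x
  have h1 : αi * (a₂ - a₁) + αj * (a₃ - a₂) + αk * (a₁ - a₃) = 0 :=
    mul_left_cancel₀ hm h1m
  have h2m : m₁ * (αi * (a₂ ^ 2 - a₁ ^ 2) + αj * (a₃ ^ 2 - a₂ ^ 2) + αk * (a₁ ^ 2 - a₃ ^ 2))
      = m₁ * 0 := by
    linear_combination -e1y - e2y - e3y
  have h2 : αi * (a₂ ^ 2 - a₁ ^ 2) + αj * (a₃ ^ 2 - a₂ ^ 2) + αk * (a₁ ^ 2 - a₃ ^ 2) = 0 :=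
    mul_left_cancel₀ hm h2m
  have h3 : αi * (a₂ - a₁) * a₃ + αj * (a₃ - a₂) * a₁ + αk * (a₁ - a₃) * a₂ = 0 := by
    linear_combination (a₁ + a₂ + a₃) * h1 - h2
  have huw : (a₂ - a₁) * (a₁ - a₃) = 0 := by
    have h : (αk - αi) * ((a₂ - a₁) * (a₁ - a₃)) = 0 := by
      linear_combination h3 - a₁ * h1
    rcases mul_eq_zero.mp h with h | h
    · exact absurd (sub_eq_zero.mp h).symm hik
    · exact h
  have huv : (a₂ - a₁) * (a₃ - a₂) = 0 := by
    have h : (αi - αj) * ((a₂ - a₁) * (a₃ - a₂)) = 0 := by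
      linear_combination h3 - a₂ * h1
    rcases mul_eq_zero.mp h with h | h
    · exact absurd (sub_eq_zero.mp h) hij
    · exact h
  have hvw : (a₃ - a₂) * (a₁ - a₃) = 0 := by
    have h : (αj - αk) * ((a₃ - a₂) * (a₁ - a₃)) = 0 := by
      linear_combination h3 - a₃ * h1
    rcases mul_eq_zero.mp h with h | h
    · exact absurd (sub_eq_zero.mp h) hjk
    · exact h
  have hu : a₂ - a₁ = 0 := by
    have h : (a₂ - a₁) ^ 2 = 0 := by linear_combination -huv - huw
    exact pow_eq_zero_iff (n := 2) (by norm_num) |>.mp h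
  have hv : a₃ - a₂ = 0 := by
    have h : (a₃ - a₂) ^ 2 = 0 := by linear_combination -huv - hvw
    exact pow_eq_zero_iff (n := 2) (by norm_num) |>.mp h
  have ha12 : a₁ = a₂ := (sub_eq_zero.mp hu).symm
  have ha23 : a₂ = a₃ := (sub_eq_zero.mp hv).symm
  have hx12 : x₁ = x₂ := by rw [ha12] at e1x; exact add_right_cancel e1x
  have hy12 : y₁ = y₂ := by rw [ha12] at e1y; exact add_right_cancel e1y
  have hx23 : x₂ = x₃ := by rw [ha23] at e2x; exact add_right_cancel e2x
  have hy23 : y₂ = y₃ := by rw [ha23] at e2y; exact add_right_cancel e2y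
  exact ⟨by rw [hx12, hy12, ha12], by rw [hx23, hy23, ha23]⟩
end

section
/- Fix distinct α_i, α_j in a finite field F_q of odd order and a nonzero m_s ∈ F_q. Define a bipartite graph on two copies of F_q × F_q where (u, v) is adjacent to (u', v') iff there exists nonzero a ∈ F_q with u' = u + m_s(α_j - α_i)a and v' = v + m_s(α_j - α_i)a². Then this graph contains no K_{2,2}: there do not exist distinct (u₁,v₁), (u₃,v₃) in the first copy and distinct (u₂,v₂), (u₄,v₄) in the second copy with all four adjacencies present. -/
/-- The single–color bipartite link graph `H(Vᵢ, Vⱼ)` contains no `K_{2,2}`. -/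
theorem stmt_6 {F : Type*} [Field F] [Fintype F]
    (hodd : Odd (Fintype.card F))
    (αi αj ms : F) (hij : αi ≠ αj) (hms : ms ≠ 0) :
    ¬ ∃ p₁ p₃ p₂ p₄ : F × F, p₁ ≠ p₃ ∧ p₂ ≠ p₄ ∧
      (∃ a : F, a ≠ 0 ∧ p₂.1 = p₁.1 + ms * (αj - αi) * a ∧ p₂.2 = p₁.2 + ms * (αj - αi) * a ^ 2) ∧
      (∃ a : F, a ≠ 0 ∧ p₄.1 = p₁.1 + ms * (αj - αi) * a ∧ p₄.2 = p₁.2 + ms * (αj - αi) * a ^ 2) ∧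
      (∃ a : F, a ≠ 0 ∧ p₂.1 = p₃.1 + ms * (αj - αi) * a ∧ p₂.2 = p₃.2 + ms * (αj - αi) * a ^ 2) ∧
      (∃ a : F, a ≠ 0 ∧ p₄.1 = p₃.1 + ms * (αj - αi) * a ∧ p₄.2 = p₃.2 + ms * (αj - αi) * a ^ 2) := by
  rintro ⟨p₁, p₃, p₂, p₄, h13, h24, ⟨a, ha, ha1, ha2⟩, ⟨a', ha', ha1', ha2'⟩,
    ⟨b, hb, hb1, hb2⟩, ⟨b', hb', hb1', hb2'⟩⟩
  have h2 : (2 : F) ≠ 0 := by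
    intro h
    have hdvd : ringChar F ∣ 2 := (CharP.cast_eq_zero_iff F (ringChar F) 2).mp (by exact_mod_cast h)
    have hne1 : ringChar F ≠ 1 := CharP.ringChar_ne_one
    have hch : ringChar F = 2 := by
      rcases (Nat.dvd_prime Nat.prime_two).mp hdvd with h1 | h1
      · exact absurd h1 hne1
      · exact h1
    have := FiniteField.even_card_of_char_two hch
    rcases hodd with ⟨k, hk⟩
    omega
  set c : F := ms * (αj - αi) with hc
  have hcne : c ≠ 0 := mul_ne_zero hms (sub_ne_zero.mpr (Ne.symm hij))
  -- first-coordinate equations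
  have e1 : c * (a - b) = p₃.1 - p₁.1 := by
    have := ha1.symm.trans hb1
    ring_nf
    ring_nf at this
    linear_combination this
  have e1' : c * (a' - b') = p₃.1 - p₁.1 := by
    have := ha1'.symm.trans hb1'
    linear_combination this
  have e2 : c * (a ^ 2 - b ^ 2) = p₃.2 - p₁.2 := by
    have := ha2.symm.trans hb2
    linear_combination this
  have e2' : c * (a' ^ 2 - b' ^ 2) = p₃.2 - p₁.2 := by
    have := ha2'.symm.trans hb2'
    linear_combination this
  have hd : a - b = a' - b' := by
    have := e1.trans e1'.symm
    exact mul_left_cancel₀ hcne this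
  have hsq : a ^ 2 - b ^ 2 = a' ^ 2 - b' ^ 2 := by
    have := e2.trans e2'.symm
    exact mul_left_cancel₀ hcne this
  by_cases hab : a = b
  · -- then p₁ = p₃
    apply h13
    ext
    · have h0 : p₃.1 - p₁.1 = 0 := by rw [← e1, hab]; ring
      linear_combination -h0
    · have h0 : p₃.2 - p₁.2 = 0 := by rw [← e2, hab]; ring
      linear_combination -h0
  · have hd0 : a - b ≠ 0 := sub_ne_zero.mpr hab
    have hsum : a + b = a' + b' := by
      have h1 : (a - b) * (a + b) = (a - b) * (a' + b') := by
        calc (a - b) * (a + b) = a ^ 2 - b ^ 2 := by ring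
        _ = a' ^ 2 - b' ^ 2 := hsq
        _ = (a' - b') * (a' + b') := by ring
        _ = (a - b) * (a' + b') := by rw [hd]
      exact mul_left_cancel₀ hd0 h1
    have haa' : a = a' := by
      have : 2 * a = 2 * a' := by linear_combination hsum + hd
      exact mul_left_cancel₀ h2 this
    apply h24
    ext
    · rw [ha1, ha1', haa']
    · rw [ha2, ha2', haa']
end

section
/- Let F_q be a finite field of odd order, let α_i ≠ α_j be elements of F_q, and let m₁, …, m_l be distinct nonzero elements of F_q. Define the bipartite graph G on two copies of F_q × F_q where (u, v) is adjacent to (u', v') iff there exist s ∈ {1,…,l} and nonzero a ∈ F_q with u' = u + m_s(α_j - α_i)a and v' = v + m_s(α_j - α_i)a². Then G is K_{2, 2l² - l + 1}-free: no two distinct vertices in one part have 2l² - l + 1 common neighbors in the other part. -/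
private lemma quad_three {F : Type*} [Field F] (α β γ : F) (hα : α ≠ 0)
    (b1 b2 b3 : F)
    (h1 : α * b1 ^ 2 + β * b1 + γ = 0)
    (h2 : α * b2 ^ 2 + β * b2 + γ = 0)
    (h3 : α * b3 ^ 2 + β * b3 + γ = 0) :
    b1 = b2 ∨ b1 = b3 ∨ b2 = b3 := by
  by_contra h
  push_neg at h
  obtain ⟨h12, h13, h23⟩ := h
  have e12 : α * (b1 + b2) + β = 0 := by
    have hf : (b1 - b2) * (α * (b1 + b2) + β) = 0 := by linear_combination h1 - h2
    rcases mul_eq_zero.mp hf with h | h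
    · exact absurd (sub_eq_zero.mp h) h12
    · exact h
  have e13 : α * (b1 + b3) + β = 0 := by
    have hf : (b1 - b3) * (α * (b1 + b3) + β) = 0 := by linear_combination h1 - h3
    rcases mul_eq_zero.mp hf with h | h
    · exact absurd (sub_eq_zero.mp h) h13
    · exact h
  have hz : α * (b2 - b3) = 0 := by linear_combination e12 - e13
  rcases mul_eq_zero.mp hz with h | h
  · exact hα h
  · exact h23 (sub_eq_zero.mp h)

private lemma key_lemma {F : Type*} [Field F] [Fintype F] [DecidableEq F]
    (h2 : (2 : F) ≠ 0) (c : F) (hc : c ≠ 0) {l : ℕ} (hl : 1 ≤ l)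
    (m : Fin l → F) (hm : Function.Injective m) (hm0 : ∀ s, m s ≠ 0) :
    ¬ ∃ (u v : F × F) (W : Finset (F × F)), u ≠ v ∧ W.card = 2 * l ^ 2 - l + 1 ∧
      ∀ w ∈ W,
        (∃ (s : Fin l) (a : F), a ≠ 0 ∧
          w.1 = u.1 + m s * c * a ∧ w.2 = u.2 + m s * c * a ^ 2) ∧
        (∃ (s : Fin l) (a : F), a ≠ 0 ∧
          w.1 = v.1 + m s * c * a ∧ w.2 = v.2 + m s * c * a ^ 2) := by
  classical
  rintro ⟨u, v, W, huv, hcard, hmem⟩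
  have hd : v.1 - u.1 ≠ 0 ∨ v.2 - u.2 ≠ 0 := by
    by_contra h
    push_neg at h
    exact huv (Prod.ext (sub_eq_zero.mp h.1).symm (sub_eq_zero.mp h.2).symm)
  have hmem1 : ∀ w ∈ W, ∃ (s : Fin l) (a : F), a ≠ 0 ∧
      w.1 = u.1 + m s * c * a ∧ w.2 = u.2 + m s * c * a ^ 2 :=
    fun w hw => (hmem w hw).1
  have hmem2 : ∀ w ∈ W, ∃ (s : Fin l) (a : F), a ≠ 0 ∧
      w.1 = v.1 + m s * c * a ∧ w.2 = v.2 + m s * c * a ^ 2 :=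
    fun w hw => (hmem w hw).2
  choose s a ha hu1 hu2 using hmem1
  choose t b hb hv1 hv2 using hmem2
  -- the quadratic relation set
  set T : Finset (Fin l × Fin l × F) :=
    Finset.univ.filter fun x =>
      ((v.1 - u.1) + m x.2.1 * c * x.2.2) ^ 2
        = m x.1 * c * ((v.2 - u.2) + m x.2.1 * c * x.2.2 ^ 2) with hT
  have hTmem : ∀ x : Fin l × Fin l × F, x ∈ T ↔
      ((v.1 - u.1) + m x.2.1 * c * x.2.2) ^ 2
        = m x.1 * c * ((v.2 - u.2) + m x.2.1 * c * x.2.2 ^ 2) := by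
    intro x
    rw [hT, Finset.mem_filter]
    simp
  -- the map from W to T
  set f : F × F → Fin l × Fin l × F := fun w =>
    if hw : w ∈ W then (s w hw, t w hw, b w hw) else (⟨0, hl⟩, ⟨0, hl⟩, 0) with hf
  have hmaps : ∀ w ∈ W, f w ∈ T := by
    intro w hw
    rw [hf]
    simp only [dif_pos hw]
    rw [hTmem]
    have E1 : m (s w hw) * c * (a w hw) = (v.1 - u.1) + m (t w hw) * c * (b w hw) := by
      linear_combination hv1 w hw - hu1 w hw
    have E2 : m (s w hw) * c * (a w hw) ^ 2 = (v.2 - u.2) + m (t w hw) * c * (b w hw) ^ 2 := by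
      linear_combination hv2 w hw - hu2 w hw
    linear_combination
      (-((v.1 - u.1) + m (t w hw) * c * (b w hw) + m (s w hw) * c * (a w hw))) * E1
        + (m (s w hw) * c) * E2
  have hinj : Set.InjOn f W := by
    intro w hw w' hw' hfe
    have hq1 : f w = (s w hw, t w hw, b w hw) := dif_pos hw
    have hq2 : f w' = (s w' hw', t w' hw', b w' hw') := dif_pos hw'
    rw [hq1, hq2, Prod.mk.injEq, Prod.mk.injEq] at hfe
    obtain ⟨e1, e2, e3⟩ := hfe
    have p1 : w.1 = w'.1 := by rw [hv1 w hw, hv1 w' hw', e2, e3]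
    have p2 : w.2 = w'.2 := by rw [hv2 w hw, hv2 w' hw', e2, e3]
    exact Prod.ext p1 p2
  have hWT : W.card ≤ T.card := Finset.card_le_card_of_injOn f hmaps hinj
  -- bound the diagonal part
  have hdiag : (T.filter fun x => x.1 = x.2.1).card ≤ l := by
    have hi : ∀ x ∈ (T.filter fun x => x.1 = x.2.1),
        ∀ y ∈ (T.filter fun x => x.1 = x.2.1), x.1 = y.1 → x = y := by
      intro x hx y hy hxy
      rw [Finset.mem_filter] at hx hy
      obtain ⟨hxT, hx2⟩ := hx
      obtain ⟨hyT, hy2⟩ := hy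
      rw [hTmem] at hxT hyT
      rw [← hx2] at hxT
      rw [← hy2, ← hxy] at hyT
      -- linear equations
      have hx' : (v.1 - u.1) ^ 2 + 2 * (v.1 - u.1) * (m x.1 * c) * x.2.2
          = (m x.1 * c) * (v.2 - u.2) := by linear_combination hxT
      have hy' : (v.1 - u.1) ^ 2 + 2 * (v.1 - u.1) * (m x.1 * c) * y.2.2
          = (m x.1 * c) * (v.2 - u.2) := by linear_combination hyT
      have hM : m x.1 * c ≠ 0 := mul_ne_zero (hm0 x.1) hc
      by_cases hD1 : v.1 - u.1 = 0
      · exfalso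
        have hD2 : v.2 - u.2 ≠ 0 := hd.resolve_left (by simpa using hD1)
        have : (m x.1 * c) * (v.2 - u.2) = 0 := by
          rw [← hx', hD1]; ring
        exact hD2 ((mul_eq_zero.mp this).resolve_left hM)
      · have hz : (2 * (v.1 - u.1) * (m x.1 * c)) * (x.2.2 - y.2.2) = 0 := by
          linear_combination hx' - hy'
        have hcoef : 2 * (v.1 - u.1) * (m x.1 * c) ≠ 0 :=
          mul_ne_zero (mul_ne_zero h2 hD1) hM
        have hbb : x.2.2 = y.2.2 :=
          sub_eq_zero.mp ((mul_eq_zero.mp hz).resolve_left hcoef)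
        exact Prod.ext hxy (Prod.ext (by rw [← hx2, ← hy2, hxy]) hbb)
    calc (T.filter fun x => x.1 = x.2.1).card
        ≤ (Finset.univ : Finset (Fin l)).card :=
          Finset.card_le_card_of_injOn (fun x => x.1)
            (fun x _ => Finset.mem_univ _) (fun x hx y hy => hi x hx y hy)
      _ = l := by simp
  -- bound the off-diagonal part
  have hoff : (T.filter fun x => ¬ x.1 = x.2.1).card ≤ 2 * (l * l - l) := by
    have hb1 : (T.filter fun x => ¬ x.1 = x.2.1).card
        ≤ 2 * ((Finset.univ : Finset (Fin l)).offDiag).card := by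
      apply Finset.card_le_mul_card_image_of_maps_to
        (f := fun x : Fin l × Fin l × F => (x.1, x.2.1))
      · intro x hx
        rw [Finset.mem_filter] at hx
        exact Finset.mem_offDiag.mpr ⟨Finset.mem_univ _, Finset.mem_univ _, hx.2⟩
      · intro p hp
        by_contra hgt
        push_neg at hgt
        obtain ⟨x, hx, y, hy, z, hz, hxy, hxz, hyz⟩ := Finset.two_lt_card.mp hgt
        have hpne : p.1 ≠ p.2 := (Finset.mem_offDiag.mp hp).2.2
        have hget : ∀ w : Fin l × Fin l × F,
            w ∈ (T.filter fun x => ¬ x.1 = x.2.1).filter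
              (fun x => (x.1, x.2.1) = p) →
            w.1 = p.1 ∧ w.2.1 = p.2 ∧
            (m p.2 * c * (m p.2 * c - m p.1 * c)) * w.2.2 ^ 2
              + (2 * (v.1 - u.1) * (m p.2 * c)) * w.2.2
              + ((v.1 - u.1) ^ 2 - (m p.1 * c) * (v.2 - u.2)) = 0 := by
          intro w hw
          rw [Finset.mem_filter, Finset.mem_filter] at hw
          obtain ⟨⟨hwT, -⟩, hwp⟩ := hw
          rw [Prod.mk.injEq] at hwp
          obtain ⟨hw1, hw2⟩ := hwp
          rw [hTmem] at hwT
          rw [hw1, hw2] at hwT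
          exact ⟨hw1, hw2, by linear_combination hwT⟩
        obtain ⟨hx1, hx2, hxq⟩ := hget x hx
        obtain ⟨hy1, hy2, hyq⟩ := hget y hy
        obtain ⟨hz1, hz2, hzq⟩ := hget z hz
        have hα : m p.2 * c * (m p.2 * c - m p.1 * c) ≠ 0 := by
          apply mul_ne_zero (mul_ne_zero (hm0 p.2) hc)
          intro h
          have : m p.2 * c = m p.1 * c := sub_eq_zero.mp h
          exact hpne.symm (hm (mul_right_cancel₀ hc this))
        have h3 := quad_three _ _ _ hα x.2.2 y.2.2 z.2.2 hxq hyq hzq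
        have heq : ∀ w w' : Fin l × Fin l × F,
            w.1 = p.1 → w.2.1 = p.2 → w'.1 = p.1 → w'.2.1 = p.2 →
            w.2.2 = w'.2.2 → w = w' := by
          intro w w' a1 a2 a3 a4 a5
          exact Prod.ext (a1.trans a3.symm) (Prod.ext (a2.trans a4.symm) a5)
        rcases h3 with h | h | h
        · exact hxy (heq x y hx1 hx2 hy1 hy2 h)
        · exact hxz (heq x z hx1 hx2 hz1 hz2 h)
        · exact hyz (heq y z hy1 hy2 hz1 hz2 h)
    rwa [Finset.offDiag_card, Finset.card_univ, Fintype.card_fin] at hb1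
  have hsplit : (T.filter fun x => x.1 = x.2.1).card
      + (T.filter fun x => ¬ x.1 = x.2.1).card = T.card :=
    Finset.card_filter_add_card_filter_not _
  have hsq : l ^ 2 = l * l := sq l
  have hll : l ≤ l * l := Nat.le_mul_of_pos_left l hl
  omega

private lemma two_ne_zero_of_odd_card {F : Type*} [Field F] [Fintype F]
    (hodd : Odd (Fintype.card F)) : (2 : F) ≠ 0 := by
  intro h
  have hchar : ringChar F = 2 := by
    have hdvd : (ringChar F : ℕ) ∣ 2 := by
      have := (CharP.cast_eq_zero_iff F (ringChar F) 2).mp (by exact_mod_cast h)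
      exact this
    have hne1 : ringChar F ≠ 1 := CharP.ringChar_ne_one
    rcases (Nat.dvd_prime Nat.prime_two).mp hdvd with h | h
    · exact absurd h hne1
    · exact h
  have heven := FiniteField.even_card_of_char_two hchar
  have hodd' := Nat.odd_iff.mp hodd
  omega

/-- The `l`-colored bipartite link graph `H(Vᵢ, Vⱼ)` is `K_{2, 2l² - l + 1}`-free:
no two distinct vertices in one part have `2l² - l + 1` common neighbors in the
other part. -/
theorem stmt_7 {F : Type*} [Field F] [Fintype F] [DecidableEq F]
    (hodd : Odd (Fintype.card F))
    (αi αj : F) (hij : αi ≠ αj) {l : ℕ} (hl : 1 ≤ l)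
    (m : Fin l → F) (hm : Function.Injective m) (hm0 : ∀ s, m s ≠ 0) :
    (¬ ∃ (u v : F × F) (W : Finset (F × F)), u ≠ v ∧ W.card = 2 * l ^ 2 - l + 1 ∧
      ∀ w ∈ W,
        (∃ (s : Fin l) (a : F), a ≠ 0 ∧
          w.1 = u.1 + m s * (αj - αi) * a ∧ w.2 = u.2 + m s * (αj - αi) * a ^ 2) ∧
        (∃ (s : Fin l) (a : F), a ≠ 0 ∧
          w.1 = v.1 + m s * (αj - αi) * a ∧ w.2 = v.2 + m s * (αj - αi) * a ^ 2)) ∧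
    (¬ ∃ (u v : F × F) (W : Finset (F × F)), u ≠ v ∧ W.card = 2 * l ^ 2 - l + 1 ∧
      ∀ w ∈ W,
        (∃ (s : Fin l) (a : F), a ≠ 0 ∧
          u.1 = w.1 + m s * (αj - αi) * a ∧ u.2 = w.2 + m s * (αj - αi) * a ^ 2) ∧
        (∃ (s : Fin l) (a : F), a ≠ 0 ∧
          v.1 = w.1 + m s * (αj - αi) * a ∧ v.2 = w.2 + m s * (αj - αi) * a ^ 2)) := by
  have h2 : (2 : F) ≠ 0 := two_ne_zero_of_odd_card hodd
  have hc : (αj - αi) ≠ 0 := sub_ne_zero.mpr (Ne.symm hij)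
  constructor
  · exact key_lemma h2 (αj - αi) hc hl m hm hm0
  · intro hex
    obtain ⟨u, v, W, huv, hcard, hmem⟩ := hex
    apply key_lemma h2 (αj - αi) hc hl (fun s => -(m s))
      (fun s t h => hm (neg_injective h)) (fun s => neg_ne_zero.mpr (hm0 s))
    refine ⟨u, v, W, huv, hcard, ?_⟩
    intro w hw
    obtain ⟨⟨s1, a1, ha1, e1, e2⟩, ⟨s2, a2, ha2, e3, e4⟩⟩ := hmem w hw
    refine ⟨⟨s1, a1, ha1, by linear_combination -e1, by linear_combination -e2⟩,
      ⟨s2, a2, ha2, by linear_combination -e3, by linear_combination -e4⟩⟩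
end

section
/- Let r ≥ 3 and t ≥ 1 be integers, and let F be an n-vertex r-uniform hypergraph with m edges that is linear (any two distinct edges share at most one vertex), contains no Berge triangle, and contains no Berge-K_{2,t+1}. Then t·n(n-1)/2 ≥ n(r-1)²·f(rm/n), where f(x) = x(x-1)/2 for x ≥ 2 and f(x) = 0 otherwise; consequently m ≤ (√t / (r(r-1)))·n^{3/2} + n/r. -/
set_option maxHeartbeats 1000000




/-- A Berge triangle in a hypergraph: three distinct vertices and three distinct
edges forming a Berge-C₃. -/
def BergeTriangle {V : Type*} (H : Finset (Finset V)) : Prop :=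
  ∃ (v₁ v₂ v₃ : V) (e₁ e₂ e₃ : Finset V),
    v₁ ≠ v₂ ∧ v₂ ≠ v₃ ∧ v₁ ≠ v₃ ∧ e₁ ≠ e₂ ∧ e₂ ≠ e₃ ∧ e₁ ≠ e₃ ∧
    e₁ ∈ H ∧ e₂ ∈ H ∧ e₃ ∈ H ∧
    v₁ ∈ e₁ ∧ v₂ ∈ e₁ ∧ v₂ ∈ e₂ ∧ v₃ ∈ e₂ ∧ v₃ ∈ e₃ ∧ v₁ ∈ e₃

/-- A Berge-K_{2,t} in a hypergraph: distinct vertices `x, y, v₁, …, v_t` and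
`2t` distinct edges `eᵢ, fᵢ` with `{x, vᵢ} ⊆ eᵢ` and `{y, vᵢ} ⊆ fᵢ`. -/
def BergeK2 {V : Type*} (t : ℕ) (H : Finset (Finset V)) : Prop :=
  ∃ (x y : V) (v : Fin t → V) (e f : Fin t → Finset V),
    Function.Injective v ∧ x ≠ y ∧ (∀ i, x ≠ v i) ∧ (∀ i, y ≠ v i) ∧
    (∀ i, e i ∈ H) ∧ (∀ i, f i ∈ H) ∧
    Function.Injective e ∧ Function.Injective f ∧ (∀ i j, e i ≠ f j) ∧
    (∀ i, x ∈ e i ∧ v i ∈ e i ∧ y ∈ f i ∧ v i ∈ f i)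

/-- The convex function `f(x) = x(x-1)/2` for `x ≥ 2` and `0` otherwise. -/
noncomputable def convChoose (x : ℝ) : ℝ := if 2 ≤ x then x * (x - 1) / 2 else 0

lemma sigma_ext3 {α β γ : Type*} {a b : Σ _ : α, Σ _ : β, γ}
    (h1 : a.1 = b.1) (h2 : a.2.1 = b.2.1) (h3 : a.2.2 = b.2.2) : a = b := by
  obtain ⟨a1, a2, a3⟩ := a
  obtain ⟨b1, b2, b3⟩ := b
  dsimp at h1 h2 h3
  subst h1; subst h2; subst h3; rfl

lemma exists_inj_fun {α : Type*} (s : Finset α) (k : ℕ) (h : k ≤ s.card) :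
    ∃ u : Fin k → α, Function.Injective u ∧ ∀ i, u i ∈ s := by
  obtain ⟨B, hB, hc⟩ := Finset.exists_subset_card_eq h
  refine ⟨fun i => (B.equivFin.symm (finCongr hc.symm i) : α), ?_, ?_⟩
  · intro i j hij
    have h2 := Subtype.val_injective hij
    have h3 := B.equivFin.symm.injective h2
    simpa using congrArg (finCongr hc) h3
  · intro i
    exact hB (B.equivFin.symm (finCongr hc.symm i)).2

lemma key_count {V : Type*} [Fintype V] [DecidableEq V] (r t : ℕ) (H : Finset (Finset V))
    (hunif : ∀ e ∈ H, e.card = r)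
    (hlinear : ∀ e ∈ H, ∀ f ∈ H, e ≠ f → (e ∩ f).card ≤ 1)
    (hC3 : ¬ BergeTriangle H) (hK2t : ¬ BergeK2 (t + 1) H) :
    (∑ v : V, ((H.filter (v ∈ ·)).card * (H.filter (v ∈ ·)).card - (H.filter (v ∈ ·)).card))
        * (r - 1) ^ 2
      ≤ t * (Fintype.card V * Fintype.card V - Fintype.card V) := by
  classical
  set A : Finset (Σ _ : V, Σ _ : Finset V × Finset V, V × V) :=
    Finset.univ.sigma (fun v => ((H.filter (v ∈ ·)).offDiag).sigma
      (fun p => (p.1.erase v) ×ˢ (p.2.erase v))) with hA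
  -- membership characterization
  have memA : ∀ a : (Σ _ : V, Σ _ : Finset V × Finset V, V × V),
      a ∈ A ↔ a.2.1.1 ∈ H ∧ a.2.1.2 ∈ H ∧ a.2.1.1 ≠ a.2.1.2 ∧ a.1 ∈ a.2.1.1 ∧ a.1 ∈ a.2.1.2 ∧
        a.2.2.1 ∈ a.2.1.1 ∧ a.2.2.1 ≠ a.1 ∧ a.2.2.2 ∈ a.2.1.2 ∧ a.2.2.2 ≠ a.1 := by
    intro a
    simp only [hA, Finset.mem_sigma, Finset.mem_offDiag, Finset.mem_filter, Finset.mem_product,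
      Finset.mem_erase, Finset.mem_univ, true_and]
    tauto
  -- linearity helper
  have lin : ∀ {e f : Finset V}, e ∈ H → f ∈ H → ∀ {a b : V},
      a ∈ e → a ∈ f → b ∈ e → b ∈ f → a ≠ b → e = f := by
    intro e f he hf a b ha1 ha2 hb1 hb2 hab
    by_contra hne
    have h1 := hlinear e he f hf hne
    have h2 : 1 < (e ∩ f).card := by
      apply Finset.one_lt_card.2
      exact ⟨a, Finset.mem_inter.2 ⟨ha1, ha2⟩, b, Finset.mem_inter.2 ⟨hb1, hb2⟩, hab⟩
    omega
  -- x ≠ y on A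
  have hxy : ∀ a ∈ A, a.2.2.1 ≠ a.2.2.2 := by
    intro a ha h
    obtain ⟨he, hf, hef, hve, hvf, hxe, hxv, hyf, hyv⟩ := (memA a).1 ha
    exact hef (lin he hf hve hvf hxe (h ▸ hyf) (Ne.symm hxv))
  -- cardinality of A
  have cardA : A.card = (∑ v : V, ((H.filter (v ∈ ·)).card * (H.filter (v ∈ ·)).card
      - (H.filter (v ∈ ·)).card)) * (r - 1) ^ 2 := by
    rw [hA, Finset.card_sigma, Finset.sum_mul]
    refine Finset.sum_congr rfl ?_
    intro v _
    rw [Finset.card_sigma]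
    have hterm : ∀ p ∈ (H.filter (v ∈ ·)).offDiag,
        ((p.1.erase v) ×ˢ (p.2.erase v)).card = (r - 1) ^ 2 := by
      intro p hp
      rw [Finset.mem_offDiag] at hp
      obtain ⟨hp1, hp2, -⟩ := hp
      rw [Finset.mem_filter] at hp1 hp2
      rw [Finset.card_product, Finset.card_erase_of_mem hp1.2, Finset.card_erase_of_mem hp2.2,
        hunif _ hp1.1, hunif _ hp2.1, sq]
    rw [Finset.sum_congr rfl hterm, Finset.sum_const, smul_eq_mul, Finset.offDiag_card]
  -- fiber bound
  have fiber : ∀ z ∈ A.image (fun a => a.2.2), (A.filter (fun a => a.2.2 = z)).card ≤ t := by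
    intro z hz
    by_contra hgt
    push_neg at hgt
    obtain ⟨u, huinj, humem⟩ := exists_inj_fun _ (t + 1) hgt
    set x := z.1 with hx
    set y := z.2 with hy
    have hmem : ∀ i, u i ∈ A := fun i => (Finset.mem_filter.1 (humem i)).1
    have hzz : ∀ i, (u i).2.2 = z := fun i => (Finset.mem_filter.1 (humem i)).2
    have props := fun i => (memA (u i)).1 (hmem i)
    set vf : Fin (t + 1) → V := fun i => (u i).1 with hvf
    set ef : Fin (t + 1) → Finset V := fun i => (u i).2.1.1 with hef
    set ff : Fin (t + 1) → Finset V := fun i => (u i).2.1.2 with hff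
    have hxei : ∀ i, x ∈ ef i := fun i => by
      have := (props i).2.2.2.2.2.1; rwa [hzz i] at this
    have hyfi : ∀ i, y ∈ ff i := fun i => by
      have := (props i).2.2.2.2.2.2.2.1; rwa [hzz i] at this
    have hxvi : ∀ i, x ≠ vf i := fun i => by
      have := (props i).2.2.2.2.2.2.1; rwa [hzz i] at this
    have hyvi : ∀ i, y ≠ vf i := fun i => by
      have := (props i).2.2.2.2.2.2.2.2; rwa [hzz i] at this
    have heH : ∀ i, ef i ∈ H := fun i => (props i).1
    have hfH : ∀ i, ff i ∈ H := fun i => (props i).2.1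
    have henef : ∀ i, ef i ≠ ff i := fun i => (props i).2.2.1
    have hvei : ∀ i, vf i ∈ ef i := fun i => (props i).2.2.2.1
    have hvfi : ∀ i, vf i ∈ ff i := fun i => (props i).2.2.2.2.1
    -- injectivity of vf
    have hvinj : Function.Injective vf := by
      intro i j hij
      apply huinj
      refine sigma_ext3 hij (Prod.ext ?_ ?_) (by rw [hzz i, hzz j])
      · exact lin (heH i) (heH j) (hij ▸ hvei i) (hvei j) (hxei i) (hxei j) (Ne.symm (hxvi j))
      · exact lin (hfH i) (hfH j) (hij ▸ hvfi i) (hvfi j) (hyfi i) (hyfi j) (Ne.symm (hyvi j))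
    -- e i ≠ f j always
    have hEF : ∀ i j, ef i ≠ ff j := by
      intro i j h
      exact henef i (lin (heH i) (hfH i) (h ▸ hyfi j) (hyfi i) (hvei i) (hvfi i) (hyvi i))
    have hxyne : x ≠ y := by
      have := hxy (u 0) (hmem 0)
      rwa [hzz 0] at this
    -- injectivity of ef
    have heinj : Function.Injective ef := by
      intro i j hij
      by_contra hne
      have hvij : vf i ≠ vf j := fun h => hne (hvinj h)
      by_cases hffij : ff i = ff j
      · exact henef i (lin (heH i) (hfH i) (hvei i) (hvfi i) (hij ▸ hvei j)
          (hffij ▸ hvfi j) hvij)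
      · exact hC3 ⟨vf i, vf j, y, ef i, ff j, ff i, hvij, Ne.symm (hyvi j), Ne.symm (hyvi i),
          hEF i j, Ne.symm hffij, hEF i i, heH i, hfH j, hfH i,
          hvei i, hij ▸ hvei j, hvfi j, hyfi j, hyfi i, hvfi i⟩
    -- injectivity of ff
    have hfinj : Function.Injective ff := by
      intro i j hij
      by_contra hne
      have hvij : vf i ≠ vf j := fun h => hne (hvinj h)
      by_cases heeij : ef i = ef j
      · exact henef i (lin (heH i) (hfH i) (hvei i) (hvfi i) (heeij ▸ hvei j)
          (hij ▸ hvfi j) hvij)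
      · exact hC3 ⟨vf i, vf j, x, ff i, ef j, ef i, hvij, Ne.symm (hxvi j), Ne.symm (hxvi i),
          Ne.symm (hEF j i), Ne.symm heeij, Ne.symm (hEF i i), hfH i, heH j, heH i,
          hvfi i, hij ▸ hvfi j, hvei j, hxei j, hxei i, hvei i⟩
    exact hK2t ⟨x, y, vf, ef, ff, hvinj, hxyne, hxvi, hyvi, heH, hfH, heinj, hfinj, hEF,
      fun i => ⟨hxei i, hvei i, hyfi i, hvfi i⟩⟩
  -- conclude
  calc (∑ v : V, ((H.filter (v ∈ ·)).card * (H.filter (v ∈ ·)).card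
      - (H.filter (v ∈ ·)).card)) * (r - 1) ^ 2 = A.card := cardA.symm
    _ ≤ t * (A.image (fun a => a.2.2)).card := Finset.card_le_mul_card_image _ t fiber
    _ ≤ t * (Fintype.card V * Fintype.card V - Fintype.card V) := by
        apply Nat.mul_le_mul_left
        have hsub : A.image (fun a => a.2.2) ⊆ (Finset.univ : Finset V).offDiag := by
          intro z hz
          obtain ⟨a, ha, haz⟩ := Finset.mem_image.1 hz
          rw [Finset.mem_offDiag]
          exact ⟨Finset.mem_univ _, Finset.mem_univ _, haz ▸ hxy a ha⟩
        have := Finset.card_le_card hsub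
        rwa [Finset.offDiag_card, Finset.card_univ] at this

lemma sum_deg {V : Type*} [Fintype V] [DecidableEq V] (H : Finset (Finset V)) :
    ∑ v : V, (H.filter (v ∈ ·)).card = ∑ e ∈ H, e.card := by
  have h1 : ∀ v : V, (H.filter (v ∈ ·)).card = ∑ e ∈ H, if v ∈ e then 1 else 0 :=
    fun v => Finset.card_filter _ _
  rw [Finset.sum_congr rfl (fun v _ => h1 v), Finset.sum_comm]
  refine Finset.sum_congr rfl fun e _ => ?_
  rw [← Finset.card_filter, Finset.filter_univ_mem]

theorem stmt_9 {V : Type*} [Fintype V] [DecidableEq V]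
    (r t n m : ℕ) (hr : 3 ≤ r) (ht : 1 ≤ t)
    (H : Finset (Finset V)) (hn : Fintype.card V = n) (hm : H.card = m)
    (hunif : ∀ e ∈ H, e.card = r)
    (hlinear : ∀ e ∈ H, ∀ f ∈ H, e ≠ f → (e ∩ f).card ≤ 1)
    (hC3 : ¬ BergeTriangle H)
    (hK2t : ¬ BergeK2 (t + 1) H) :
    (t : ℝ) * n * (n - 1) / 2 ≥ (n : ℝ) * ((r : ℝ) - 1) ^ 2 * convChoose (r * m / n) ∧
    (m : ℝ) ≤ Real.sqrt t / ((r : ℝ) * ((r : ℝ) - 1)) * (n : ℝ) ^ ((3 : ℝ) / 2) + (n : ℝ) / r := by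
  have key := key_count r t H hunif hlinear hC3 hK2t
  have hdeg := sum_deg H
  classical
  subst hn hm
  set n := Fintype.card V with hn
  set m := H.card with hm
  set d : V → ℕ := fun v => (H.filter (v ∈ ·)).card with hd
  have hr0 : (0 : ℝ) < r := by exact_mod_cast (by omega : 0 < r)
  have hr1 : (0 : ℝ) < (r : ℝ) - 1 := by
    have : (3 : ℝ) ≤ r := by exact_mod_cast hr
    linarith
  have ht0 : (0 : ℝ) ≤ t := Nat.cast_nonneg t
  -- sum of degrees
  have hS1 : ∑ v : V, d v = m * r := by
    rw [hd, hdeg]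
    rw [Finset.sum_congr rfl hunif, Finset.sum_const, smul_eq_mul]
  -- real versions
  set M : ℝ := (r : ℝ) * m with hM
  have hS1R : ∑ v : V, (d v : ℝ) = M := by
    rw [← Nat.cast_sum, hS1, hM]
    push_cast
    ring
  set S2 : ℝ := ∑ v : V, (d v : ℝ) ^ 2 with hS2
  have hle : ∀ v, d v ≤ d v * d v := by
    intro v
    rcases Nat.eq_zero_or_pos (d v) with h | h
    · simp [h]
    · exact Nat.le_mul_of_pos_left _ h
  have hnn : n ≤ n * n := by
    rcases Nat.eq_zero_or_pos n with h | h
    · simp [h]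
    · exact Nat.le_mul_of_pos_left _ h
  have keyR : (S2 - M) * ((r : ℝ) - 1) ^ 2 ≤ (t : ℝ) * ((n : ℝ) * n - n) := by
    have hc := (Nat.cast_le (α := ℝ)).2 key
    push_cast [Nat.cast_sub (Nat.le_mul_self _), Nat.cast_sub (hle _), Nat.cast_sub hnn, Nat.cast_sub (by omega : 1 ≤ r)] at hc
    calc (S2 - M) * ((r : ℝ) - 1) ^ 2
        = (∑ v : V, ((d v : ℝ) * d v - d v)) * ((r : ℝ) - 1) ^ 2 := by
          rw [Finset.sum_sub_distrib, hS1R]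
          congr 1
          rw [hS2]
          congr 1
          exact Finset.sum_congr rfl fun v _ => by ring
      _ ≤ (t : ℝ) * ((n : ℝ) * n - n) := hc
  have hcs : M ^ 2 ≤ (n : ℝ) * S2 := by
    have h := sq_sum_le_card_mul_sum_sq (s := (Finset.univ : Finset V)) (f := fun v => (d v : ℝ))
    rwa [Finset.card_univ, hS1R] at h
  have hnR : (0 : ℝ) ≤ n := Nat.cast_nonneg n
  constructor
  · -- first inequality
    rw [ge_iff_le, convChoose]
    split_ifs with h2
    · have hn0 : (0 : ℝ) < n := by
        rcases eq_or_lt_of_le hnR with h | h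
        · rw [← h] at h2
          rw [div_zero] at h2
          norm_num at h2
        · exact h
      have hdiv : M ^ 2 / n ≤ S2 := (div_le_iff₀ hn0).2 (by linarith [hcs])
      have hkey2 : ((r : ℝ) - 1) ^ 2 * (M ^ 2 / n - M) ≤ (t : ℝ) * ((n : ℝ) * n - n) := by
        nlinarith [keyR, sq_nonneg ((r : ℝ) - 1)]
      have hrw : (n : ℝ) * ((r : ℝ) - 1) ^ 2 * ((r : ℝ) * m / n * ((r : ℝ) * m / n - 1) / 2)
          = ((r : ℝ) - 1) ^ 2 * (M ^ 2 / n - M) / 2 := by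
        rw [hM]
        field_simp
      rw [hrw]
      nlinarith [hkey2]
    · have h1 : (0 : ℝ) ≤ (n : ℝ) * ((n : ℝ) - 1) := by
        rcases Nat.eq_zero_or_pos n with h | h
        · simp [h]
        · have : (1 : ℝ) ≤ n := by exact_mod_cast h
          nlinarith
      have h2 : (n : ℝ) * ((r : ℝ) - 1) ^ 2 * 0 = 0 := by ring
      rw [h2]
      have := mul_nonneg ht0 h1
      linarith
  · -- second inequality
    have hterm1 : (0 : ℝ) ≤ Real.sqrt t / ((r : ℝ) * ((r : ℝ) - 1)) * (n : ℝ) ^ ((3 : ℝ) / 2) := by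
      apply mul_nonneg
      · exact div_nonneg (Real.sqrt_nonneg _) (mul_nonneg hr0.le hr1.le)
      · exact Real.rpow_nonneg hnR _
    rcases le_or_gt M n with hMn | hMn
    · have : (m : ℝ) ≤ (n : ℝ) / r := by
        rw [le_div_iff₀ hr0]
        calc (m : ℝ) * r = M := by rw [hM]; ring
          _ ≤ n := hMn
      linarith
    · -- M > n
      have hn0 : (0 : ℝ) < n := by
        by_contra hcon
        push_neg at hcon
        have hn' : n = 0 := by exact_mod_cast le_antisymm hcon hnR
        have hM0 : (0 : ℝ) < M := lt_of_le_of_lt hnR hMn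
        have hm0 : m ≠ 0 := by
          intro h
          rw [hM, h] at hM0
          simp at hM0
        obtain ⟨e, he⟩ := Finset.card_pos.1 (Nat.pos_of_ne_zero hm0)
        have h1 : e.card = r := hunif e he
        have h2 : e.card ≤ n := by rw [hn]; exact Finset.card_le_univ e
        omega
      -- key quadratic bound
      have hstep : ((r : ℝ) - 1) ^ 2 * ((M - n) ^ 2 / n) ≤ (t : ℝ) * ((n : ℝ) * n) := by
        have hdiv : M ^ 2 / n ≤ S2 := (div_le_iff₀ hn0).2 (by linarith [hcs])
        have h1 : (M - n) ^ 2 / n ≤ M ^ 2 / n - M := by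
          have ha : (M - n) ^ 2 ≤ M ^ 2 - M * n := by nlinarith [hMn, hn0]
          calc (M - n) ^ 2 / n ≤ (M ^ 2 - M * n) / n := by gcongr
            _ = M ^ 2 / n - M := by
                field_simp
        have h2 : (M - n) ^ 2 / n ≤ S2 - M := by linarith
        have h3 : (t : ℝ) * ((n : ℝ) * n - n) ≤ (t : ℝ) * ((n : ℝ) * n) := by
          apply mul_le_mul_of_nonneg_left ?_ ht0
          linarith
        calc ((r : ℝ) - 1) ^ 2 * ((M - n) ^ 2 / n)
            ≤ ((r : ℝ) - 1) ^ 2 * (S2 - M) := by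
              exact mul_le_mul_of_nonneg_left h2 (sq_nonneg _)
          _ = (S2 - M) * ((r : ℝ) - 1) ^ 2 := by ring
          _ ≤ (t : ℝ) * ((n : ℝ) * n - n) := keyR
          _ ≤ (t : ℝ) * ((n : ℝ) * n) := h3
      have hcube : (((r : ℝ) - 1) * (M - n)) ^ 2 ≤ (t : ℝ) * (n : ℝ) ^ 3 := by
        calc (((r : ℝ) - 1) * (M - n)) ^ 2
            = (((r : ℝ) - 1) ^ 2 * ((M - n) ^ 2 / n)) * n := by
              field_simp
          _ ≤ ((t : ℝ) * ((n : ℝ) * n)) * n := mul_le_mul_of_nonneg_right hstep hnR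
          _ = (t : ℝ) * (n : ℝ) ^ 3 := by ring
      have hrhs_sq : (Real.sqrt t * (n : ℝ) ^ ((3 : ℝ) / 2)) ^ 2 = (t : ℝ) * (n : ℝ) ^ 3 := by
        rw [mul_pow, Real.sq_sqrt ht0]
        congr 1
        rw [← Real.rpow_natCast ((n : ℝ) ^ ((3 : ℝ) / 2)) 2, ← Real.rpow_mul hnR]
        norm_num
      have hfin : ((r : ℝ) - 1) * (M - n) ≤ Real.sqrt t * (n : ℝ) ^ ((3 : ℝ) / 2) := by
        have hL : 0 ≤ ((r : ℝ) - 1) * (M - n) := mul_nonneg hr1.le (by linarith)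
        have hR : 0 ≤ Real.sqrt t * (n : ℝ) ^ ((3 : ℝ) / 2) :=
          mul_nonneg (Real.sqrt_nonneg _) (Real.rpow_nonneg hnR _)
        have h := Real.sqrt_le_sqrt (hcube.trans_eq hrhs_sq.symm)
        rwa [Real.sqrt_sq hL, Real.sqrt_sq hR] at h
      have hM' : M - n ≤ Real.sqrt t * (n : ℝ) ^ ((3 : ℝ) / 2) / ((r : ℝ) - 1) := by
        rw [le_div_iff₀ hr1]
        calc (M - n) * ((r : ℝ) - 1) = ((r : ℝ) - 1) * (M - n) := by ring
          _ ≤ _ := hfin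
      have hmM : (m : ℝ) = M / r := by
        rw [hM]
        field_simp
      rw [hmM, div_le_iff₀ hr0]
      have hexp : (Real.sqrt t / ((r : ℝ) * ((r : ℝ) - 1)) * (n : ℝ) ^ ((3 : ℝ) / 2)
          + (n : ℝ) / r) * r = Real.sqrt t * (n : ℝ) ^ ((3 : ℝ) / 2) / ((r : ℝ) - 1) + n := by
        field_simp
      rw [hexp]
      linarith [hM']
end

section
/- Let r ≥ 3 and let F be an r-uniform r-partite linear hypergraph with parts V₁, …, V_r, each of size n, containing no Berge triangle and no Berge-K_{2,3}. Then the number m of edges of F satisfies 2r·C(n,2) ≥ r(r-1)·n·(m/n)((m/n) - 1)/2, and consequently m ≤ √(2/(r-1))·n^{3/2} + n. -/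
def hyperdeg {V : Type*} [DecidableEq V] (H : Finset (Finset V)) (v : V) : ℕ :=
  (H.filter (fun e => v ∈ e)).card

noncomputable def thePick {V : Type*} {r : ℕ} [Nonempty V] (part : V → Fin r)
    (e : Finset V) (j : Fin r) : V :=
  if h : ∃ v, v ∈ e ∧ part v = j then h.choose else Classical.arbitrary V

lemma thePick_spec {V : Type*} {r : ℕ} [Nonempty V] [DecidableEq V] (part : V → Fin r)
    (e : Finset V) (j : Fin r) (h1 : (e.filter (fun v => part v = j)).card = 1) :
    (thePick part e j ∈ e ∧ part (thePick part e j) = j) ∧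
      ∀ v ∈ e, part v = j → v = thePick part e j := by
  obtain ⟨a, ha⟩ := Finset.card_eq_one.mp h1
  have hamem : a ∈ e ∧ part a = j := by
    have : a ∈ e.filter (fun v => part v = j) := ha ▸ Finset.mem_singleton_self a
    simpa using this
  have hex : ∃ v, v ∈ e ∧ part v = j := ⟨a, hamem⟩
  have huniq : ∀ v ∈ e, part v = j → v = a := by
    intro v hv hpv
    have : v ∈ e.filter (fun w => part w = j) := Finset.mem_filter.mpr ⟨hv, hpv⟩
    rw [ha] at this
    simpa using this
  have hp : thePick part e j = hex.choose := dif_pos hex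
  have hspec : hex.choose ∈ e ∧ part hex.choose = j := hex.choose_spec
  constructor
  · rw [hp]; exact hspec
  · intro v hv hpv
    rw [hp, huniq _ hspec.1 hspec.2]
    exact huniq v hv hpv

lemma vec3_inj {α : Type*} {a b c : α} (hab : a ≠ b) (hac : a ≠ c) (hbc : b ≠ c) :
    Function.Injective ![a, b, c] := by
  intro i j h
  fin_cases i <;> fin_cases j <;> simp_all


lemma final_bound {R N M : ℝ} (hR : 3 ≤ R) (hN : 0 < N)
    (main2 : (R - 1) * (M^2 / N - M) ≤ 2 * N * (N - 1)) :
    M ≤ Real.sqrt (2 / (R - 1)) * N ^ ((3:ℝ)/2) + N := by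
  have hr1R : (0:ℝ) < R - 1 := by linarith
  have step : (R - 1) * (M^2 - M * N) ≤ 2 * N^3 := by
    have h4 := mul_le_mul_of_nonneg_right main2 hN.le
    have hmm : (M^2 / N) * N = M^2 := div_mul_cancel₀ _ (ne_of_gt hN)
    calc (R - 1) * (M^2 - M * N)
        = ((R - 1) * (M^2 / N - M)) * N := by
          have : (M^2 / N - M) * N = M^2 - M * N := by rw [sub_mul, hmm]
          rw [mul_assoc, this]
      _ ≤ (2 * N * (N - 1)) * N := h4
      _ ≤ 2 * N^3 := by nlinarith [sq_nonneg N]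
  by_cases hmn : M ≤ N
  · have hpos : (0:ℝ) ≤ Real.sqrt (2 / (R - 1)) * N ^ ((3:ℝ)/2) := by positivity
    linarith
  · push_neg at hmn
    have hsub : (M - N)^2 ≤ 2 / (R - 1) * N^3 := by
      rw [div_mul_eq_mul_div, le_div_iff₀ hr1R]
      have h3 : (0:ℝ) ≤ ((R - 1) * N) * (M - N) :=
        mul_nonneg (mul_nonneg hr1R.le hN.le) (by linarith)
      nlinarith [step, h3]
    have h4 : M - N ≤ Real.sqrt (2 / (R - 1) * N^3) := by
      have h5 := Real.sqrt_le_sqrt hsub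
      rwa [Real.sqrt_sq (by linarith : (0:ℝ) ≤ M - N)] at h5
    have h5 : Real.sqrt (2 / (R - 1) * N^3)
        = Real.sqrt (2 / (R - 1)) * N ^ ((3:ℝ)/2) := by
      rw [Real.sqrt_mul (by positivity)]
      congr 1
      rw [show (N^3 : ℝ) = N ^ ((3:ℕ) : ℝ) from (Real.rpow_natCast _ 3).symm]
      rw [Real.sqrt_eq_rpow, ← Real.rpow_mul hN.le]
      norm_num
    rw [h5] at h4
    linarith

theorem stmt_10 {V : Type*} [Fintype V] [DecidableEq V]
    (r n m : ℕ) (hr : 3 ≤ r)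
    (part : V → Fin r)
    (hparts : ∀ i, (Finset.univ.filter (fun v => part v = i)).card = n)
    (H : Finset (Finset V)) (hm : H.card = m)
    (hpartite : ∀ e ∈ H, ∀ i, (e.filter (fun v => part v = i)).card = 1)
    (hlinear : ∀ e ∈ H, ∀ f ∈ H, e ≠ f → (e ∩ f).card ≤ 1)
    (hC3 : ¬ BergeTriangle H)
    (hK23 : ¬ BergeK2 3 H) :
    2 * (r : ℝ) * (n.choose 2) ≥
      (r : ℝ) * ((r : ℝ) - 1) * n * (((m : ℝ) / n) * ((m : ℝ) / n - 1)) / 2 ∧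
    (m : ℝ) ≤ Real.sqrt (2 / ((r : ℝ) - 1)) * (n : ℝ) ^ ((3 : ℝ) / 2) + n := by
  classical
  rcases Nat.eq_zero_or_pos n with hn0 | hnpos
  · -- degenerate case n = 0
    subst hn0
    have hH : H = ∅ := by
      by_contra h
      obtain ⟨e, he⟩ := Finset.nonempty_iff_ne_empty.mpr h
      have h1 := hpartite e he ⟨0, by omega⟩
      obtain ⟨v, -⟩ := Finset.card_pos.mp (show 0 < (e.filter
        (fun v => part v = ⟨0, by omega⟩)).card by omega)
      have h2 := hparts (part v)
      have h3 : v ∈ Finset.univ.filter (fun w => part w = part v) := by simp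
      have := Finset.card_pos.mpr ⟨v, h3⟩
      omega
    have hm0 : m = 0 := by rw [← hm, hH, Finset.card_empty]
    subst hm0
    constructor
    · norm_num
    · have h0 : (0:ℝ) ≤ Real.sqrt (2 / ((r:ℝ) - 1)) * ((0:ℕ) : ℝ) ^ ((3:ℝ)/2) + ((0:ℕ):ℝ) := by
        positivity
      simpa using h0
  -- main case
  have hr0 : 0 < r := by omega
  have hVcard : Fintype.card V = r * n := by
    rw [← Finset.card_univ,
      Finset.card_eq_sum_card_fiberwise (f := part) (t := Finset.univ)
        (fun x _ => Finset.mem_univ _)]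
    simp [hparts]
  have hVne : Nonempty V := by
    rw [← Fintype.card_pos_iff, hVcard]
    exact Nat.mul_pos hr0 hnpos
  haveI := hVne
  -- linearity in convenient form
  have hline : ∀ e ∈ H, ∀ f ∈ H, ∀ a b : V,
      a ≠ b → a ∈ e → a ∈ f → b ∈ e → b ∈ f → e = f := by
    intro e he f hf a b hab hae haf hbe hbf
    by_contra hef
    have h1 := hlinear e he f hf hef
    have h2 : 1 < (e ∩ f).card := Finset.one_lt_card.mpr
      ⟨a, Finset.mem_inter.mpr ⟨hae, haf⟩, b, Finset.mem_inter.mpr ⟨hbe, hbf⟩, hab⟩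
    omega
  -- degree sums per part
  have hdegsum : ∀ i : Fin r,
      ∑ v ∈ Finset.univ.filter (fun v => part v = i), hyperdeg H v = m := by
    intro i
    calc ∑ v ∈ Finset.univ.filter (fun v => part v = i), hyperdeg H v
        = ∑ v ∈ Finset.univ.filter (fun v => part v = i), ∑ e ∈ H, if v ∈ e then 1 else 0 :=
          Finset.sum_congr rfl (fun v _ => Finset.card_filter _ _)
      _ = ∑ e ∈ H, ∑ v ∈ Finset.univ.filter (fun v => part v = i), if v ∈ e then 1 else 0 :=
          Finset.sum_comm
      _ = ∑ e ∈ H, (e.filter (fun v => part v = i)).card := by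
          refine Finset.sum_congr rfl fun e _ => ?_
          rw [← Finset.card_filter]
          congr 1
          ext v
          simp [Finset.mem_filter, and_comm]
      _ = ∑ _e ∈ H, 1 := Finset.sum_congr rfl (fun e he => hpartite e he i)
      _ = m := by rw [Finset.sum_const, smul_eq_mul, mul_one, hm]
  -- the incidence set T
  set T : Finset (Fin r × V × Finset V × Finset V) :=
    (Finset.univ ×ˢ Finset.univ ×ˢ H ×ˢ H).filter
      (fun p => p.2.2.1 ≠ p.2.2.2 ∧ p.2.1 ∈ p.2.2.1 ∧ p.2.1 ∈ p.2.2.2 ∧ p.1 ≠ part p.2.1)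
    with hTdef
  have hmemT : ∀ (j : Fin r) (v : V) (e f : Finset V),
      ((j, v, e, f) ∈ T) ↔ (e ∈ H ∧ f ∈ H ∧ e ≠ f ∧ v ∈ e ∧ v ∈ f ∧ j ≠ part v) := by
    intro j v e f
    simp only [hTdef, Finset.mem_filter, Finset.mem_product, Finset.mem_univ, true_and]
    tauto
  -- cardinality of T via fibers over v
  have hfibv : ∀ v : V, (T.filter (fun p => p.2.1 = v)).card
      = (r - 1) * (hyperdeg H v * hyperdeg H v - hyperdeg H v) := by
    intro v
    have hbij : (T.filter (fun p => p.2.1 = v)).card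
        = ((Finset.univ.filter (fun j : Fin r => j ≠ part v)) ×ˢ
            (H.filter (fun e => v ∈ e)).offDiag).card := by
      apply Finset.card_nbij' (i := fun p => (p.1, p.2.2)) (j := fun q => (q.1, v, q.2))
      · rintro ⟨j, w, e, f⟩ hp
        rw [Finset.mem_coe, Finset.mem_filter] at hp
        obtain ⟨hpT, hw⟩ := hp
        have hw' : w = v := hw
        subst hw'
        obtain ⟨he, hf, hef, hwe, hwf, hj⟩ := (hmemT j w e f).mp hpT
        simp only [Finset.mem_coe, Finset.mem_product, Finset.mem_filter, Finset.mem_offDiag, Finset.mem_univ,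
          true_and]
        exact ⟨hj, ⟨he, hwe⟩, ⟨hf, hwf⟩, hef⟩
      · rintro ⟨j, e, f⟩ hq
        simp only [Finset.mem_coe, Finset.mem_product, Finset.mem_filter, Finset.mem_offDiag, Finset.mem_univ,
          true_and] at hq
        obtain ⟨hj, ⟨he, hve⟩, ⟨hf, hvf⟩, hef⟩ := hq
        rw [Finset.mem_coe, Finset.mem_filter, hmemT]
        exact ⟨⟨he, hf, hef, hve, hvf, hj⟩, rfl⟩
      · rintro ⟨j, w, e, f⟩ hp
        rw [Finset.mem_coe, Finset.mem_filter] at hp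
        have hw' : w = v := hp.2
        subst hw'
        rfl
      · rintro ⟨j, e, f⟩ _
        rfl
    rw [hbij, Finset.card_product, Finset.filter_ne', Finset.card_erase_of_mem (Finset.mem_univ _),
      Finset.card_univ, Fintype.card_fin, Finset.offDiag_card]
    rfl
  have hTcard : T.card = ∑ v : V, (r - 1) * (hyperdeg H v * hyperdeg H v - hyperdeg H v) := by
    rw [Finset.card_eq_sum_card_fiberwise (f := fun p => p.2.1) (t := Finset.univ)
      (fun _ _ => Finset.mem_univ _)]
    exact Finset.sum_congr rfl fun v _ => hfibv v
  -- the target pair set P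
  set P : Finset (V × V) :=
    Finset.univ.filter (fun q : V × V => part q.1 = part q.2 ∧ q.1 ≠ q.2) with hPdef
  have hPcard : P.card = (r * n) * (n - 1) := by
    rw [Finset.card_eq_sum_card_fiberwise (f := Prod.fst) (t := Finset.univ)
      (fun _ _ => Finset.mem_univ _)]
    have hfib : ∀ u : V, (P.filter (fun q => q.1 = u)).card = n - 1 := by
      intro u
      have hbij : (P.filter (fun q => q.1 = u)).card
          = ((Finset.univ.filter (fun w => part w = part u)).erase u).card := by
        apply Finset.card_nbij' (i := fun q => q.2) (j := fun w => (u, w))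
        · rintro ⟨a, b⟩ hq
          rw [Finset.mem_coe, Finset.mem_filter] at hq
          have ha : a = u := hq.2
          subst ha
          rw [hPdef, Finset.mem_filter] at hq
          obtain ⟨⟨-, hp1, hp2⟩, -⟩ := hq
          rw [Finset.mem_coe, Finset.mem_erase]
          exact ⟨Ne.symm hp2, by simp [hp1.symm]⟩
        · intro w hw
          rw [Finset.mem_coe, Finset.mem_erase, Finset.mem_filter] at hw
          obtain ⟨hwu, -, hpw⟩ := hw
          rw [Finset.mem_coe, Finset.mem_filter, hPdef, Finset.mem_filter]
          exact ⟨⟨Finset.mem_univ _, hpw.symm, Ne.symm hwu⟩, rfl⟩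
        · rintro ⟨a, b⟩ hq
          rw [Finset.mem_coe, Finset.mem_filter] at hq
          have ha : a = u := hq.2
          subst ha
          rfl
        · intro w _
          rfl
      rw [hbij, Finset.card_erase_of_mem (by simp), hparts]
    rw [Finset.sum_congr rfl (fun u _ => hfib u), Finset.sum_const, smul_eq_mul,
      Finset.card_univ, hVcard]
  -- per-tuple facts for elements of a fiber over (u, w)
  have hF : ∀ (u w : V) (j : Fin r) (v : V) (e f : Finset V),
      ((j, v, e, f) ∈ T) → thePick part e j = u → thePick part f j = w →
      e ∈ H ∧ f ∈ H ∧ e ≠ f ∧ v ∈ e ∧ v ∈ f ∧ u ∈ e ∧ w ∈ f ∧ part u = j ∧ part w = j ∧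
        part v ≠ j ∧ u ≠ v ∧ w ≠ v := by
    intro u w j v e f hT hu hw
    obtain ⟨he, hf, hef, hve, hvf, hj⟩ := (hmemT j v e f).mp hT
    obtain ⟨⟨hmem, hpart⟩, -⟩ := thePick_spec part e j (hpartite e he j)
    obtain ⟨⟨hmem', hpart'⟩, -⟩ := thePick_spec part f j (hpartite f hf j)
    rw [hu] at hmem hpart
    rw [hw] at hmem' hpart'
    refine ⟨he, hf, hef, hve, hvf, hmem, hmem', hpart, hpart', Ne.symm hj, ?_, ?_⟩
    · intro h
      exact hj (by rw [← h, hpart])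
    · intro h
      exact hj (by rw [← h, hpart'])
  -- two fiber elements with the same middle vertex coincide
  have hinj : ∀ (u w : V) (j : Fin r) (v : V) (e f : Finset V),
      ((j, v, e, f) ∈ T) → thePick part e j = u → thePick part f j = w →
      ∀ (j' : Fin r) (v' : V) (e' f' : Finset V),
      ((j', v', e', f') ∈ T) → thePick part e' j' = u → thePick part f' j' = w →
      v = v' → j = j' ∧ e = e' ∧ f = f' := by
    intro u w j v e f h1 h2 h3 j' v' e' f' h1' h2' h3' hvv
    subst hvv
    obtain ⟨he, hf, hef, hve, hvf, hue, hwf, hpu, hpw, hpv, huv, hwv⟩ :=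
      hF u w j v e f h1 h2 h3
    obtain ⟨he', hf', hef', hve', hvf', hue', hwf', hpu', hpw', hpv', huv', hwv'⟩ :=
      hF u w j' v e' f' h1' h2' h3'
    have hjj : j = j' := by rw [← hpu, ← hpu']
    refine ⟨hjj, ?_, ?_⟩
    · exact hline e he e' he' u v huv hue hue' hve hve'
    · exact hline f hf f' hf' w v hwv hwf hwf' hvf hvf'
  -- distinct middle vertices give distinct e-edges
  have hEdist : ∀ (u w : V) (j : Fin r) (v : V) (e f : Finset V),
      ((j, v, e, f) ∈ T) → thePick part e j = u → thePick part f j = w →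
      ∀ (j' : Fin r) (v' : V) (e' f' : Finset V),
      ((j', v', e', f') ∈ T) → thePick part e' j' = u → thePick part f' j' = w →
      v ≠ v' → e ≠ e' := by
    intro u w j v e f h1 h2 h3 j' v' e' f' h1' h2' h3' hvv hee
    obtain ⟨he, hf, hef, hve, hvf, hue, hwf, hpu, hpw, hpv, huv, hwv⟩ :=
      hF u w j v e f h1 h2 h3
    obtain ⟨he', hf', hef', hve', hvf', hue', hwf', hpu', hpw', hpv', huv', hwv'⟩ :=
      hF u w j' v' e' f' h1' h2' h3'
    have hve'e : v' ∈ e := by rw [hee]; exact hve'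
    by_cases hff : f = f'
    · exact hef (hline e he f hf v v' hvv hve hvf hve'e (by rw [hff]; exact hvf'))
    · refine hC3 ⟨v, v', w, e, f', f, hvv, Ne.symm hwv', Ne.symm hwv, ?_, Ne.symm hff, hef,
        he, hf', hf, hve, hve'e, hvf', hwf', hwf, hvf⟩
      intro h
      exact hff (hline f hf f' hf' v w (Ne.symm hwv) hvf (by rw [← h]; exact hve) hwf hwf')
  -- distinct middle vertices give distinct f-edges
  have hFdist : ∀ (u w : V) (j : Fin r) (v : V) (e f : Finset V),
      ((j, v, e, f) ∈ T) → thePick part e j = u → thePick part f j = w →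
      ∀ (j' : Fin r) (v' : V) (e' f' : Finset V),
      ((j', v', e', f') ∈ T) → thePick part e' j' = u → thePick part f' j' = w →
      v ≠ v' → f ≠ f' := by
    intro u w j v e f h1 h2 h3 j' v' e' f' h1' h2' h3' hvv hff
    have hee : e ≠ e' := hEdist u w j v e f h1 h2 h3 j' v' e' f' h1' h2' h3' hvv
    obtain ⟨he, hf, hef, hve, hvf, hue, hwf, hpu, hpw, hpv, huv, hwv⟩ :=
      hF u w j v e f h1 h2 h3
    obtain ⟨he', hf', hef', hve', hvf', hue', hwf', hpu', hpw', hpv', huv', hwv'⟩ :=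
      hF u w j' v' e' f' h1' h2' h3'
    have hvf'f : v' ∈ f := by rw [hff]; exact hvf'
    refine hC3 ⟨v, v', u, f, e', e, hvv, Ne.symm huv', Ne.symm huv, ?_, Ne.symm hee,
      Ne.symm hef, hf, he', he, hvf, hvf'f, hve', hue', hue, hve⟩
    intro h
    exact hee (hline e he e' he' u v huv hue hue' hve (by rw [← h]; exact hvf))
  -- cross distinctness: e-edges differ from f-edges
  have hEFdist : ∀ (u w : V) (j : Fin r) (v : V) (e f : Finset V),
      ((j, v, e, f) ∈ T) → thePick part e j = u → thePick part f j = w →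
      ∀ (j' : Fin r) (v' : V) (e' f' : Finset V),
      ((j', v', e', f') ∈ T) → thePick part e' j' = u → thePick part f' j' = w →
      e ≠ f' := by
    intro u w j v e f h1 h2 h3 j' v' e' f' h1' h2' h3'
    obtain ⟨he, hf, hef, hve, hvf, hue, hwf, hpu, hpw, hpv, huv, hwv⟩ :=
      hF u w j v e f h1 h2 h3
    obtain ⟨he', hf', hef', hve', hvf', hue', hwf', hpu', hpw', hpv', huv', hwv'⟩ :=
      hF u w j' v' e' f' h1' h2' h3'
    by_cases hvv : v = v'
    · obtain ⟨-, -, hfq⟩ := hinj u w j v e f h1 h2 h3 j' v' e' f' h1' h2' h3' hvv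
      rw [← hfq]
      exact hef
    · intro h
      have hff : f ≠ f' := hFdist u w j v e f h1 h2 h3 j' v' e' f' h1' h2' h3' hvv
      exact hff (hline f hf f' hf' w v hwv hwf hwf' hvf (by rw [← h]; exact hve))
  -- the projection map to pairs
  have hmaps : ∀ p ∈ T, (thePick part p.2.2.1 p.1, thePick part p.2.2.2 p.1) ∈ P := by
    rintro ⟨j, v, e, f⟩ hp
    obtain ⟨he, hf, hef, hve, hvf, hj⟩ := (hmemT j v e f).mp hp
    obtain ⟨⟨hu1, hu2⟩, -⟩ := thePick_spec part e j (hpartite e he j)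
    obtain ⟨⟨hw1, hw2⟩, -⟩ := thePick_spec part f j (hpartite f hf j)
    simp only [hPdef, Finset.mem_filter, Finset.mem_univ, true_and]
    refine ⟨by rw [hu2, hw2], ?_⟩
    intro hEq
    have hne : thePick part e j ≠ v := by
      intro h
      exact hj (by rw [← h, hu2])
    exact hef (hline e he f hf (thePick part e j) v hne hu1 (by rw [hEq]; exact hw1) hve hvf)
  -- each pair is hit at most twice
  have hfib2 : ∀ q ∈ P, (T.filter
      (fun p => (thePick part p.2.2.1 p.1, thePick part p.2.2.2 p.1) = q)).card ≤ 2 := by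
    rintro ⟨u, w⟩ hq
    by_contra hgt
    push_neg at hgt
    obtain ⟨p₁, hp₁, p₂, hp₂, p₃, hp₃, h12, h13, h23⟩ := Finset.two_lt_card.mp hgt
    obtain ⟨j₁, v₁, e₁, f₁⟩ := p₁
    obtain ⟨j₂, v₂, e₂, f₂⟩ := p₂
    obtain ⟨j₃, v₃, e₃, f₃⟩ := p₃
    rw [Finset.mem_filter] at hp₁ hp₂ hp₃
    have hu₁ : thePick part e₁ j₁ = u := congrArg Prod.fst hp₁.2
    have hw₁ : thePick part f₁ j₁ = w := congrArg Prod.snd hp₁.2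
    have hu₂ : thePick part e₂ j₂ = u := congrArg Prod.fst hp₂.2
    have hw₂ : thePick part f₂ j₂ = w := congrArg Prod.snd hp₂.2
    have hu₃ : thePick part e₃ j₃ = u := congrArg Prod.fst hp₃.2
    have hw₃ : thePick part f₃ j₃ = w := congrArg Prod.snd hp₃.2
    have hT₁ := hp₁.1
    have hT₂ := hp₂.1
    have hT₃ := hp₃.1
    obtain ⟨he₁, hf₁, hef₁, hve₁, hvf₁, hue₁, hwf₁, hpu₁, hpw₁, hpv₁, huv₁, hwv₁⟩ :=
      hF u w j₁ v₁ e₁ f₁ hT₁ hu₁ hw₁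
    obtain ⟨he₂, hf₂, hef₂, hve₂, hvf₂, hue₂, hwf₂, hpu₂, hpw₂, hpv₂, huv₂, hwv₂⟩ :=
      hF u w j₂ v₂ e₂ f₂ hT₂ hu₂ hw₂
    obtain ⟨he₃, hf₃, hef₃, hve₃, hvf₃, hue₃, hwf₃, hpu₃, hpw₃, hpv₃, huv₃, hwv₃⟩ :=
      hF u w j₃ v₃ e₃ f₃ hT₃ hu₃ hw₃
    have hv12 : v₁ ≠ v₂ := by
      intro h
      obtain ⟨hj, hee, hff⟩ := hinj u w j₁ v₁ e₁ f₁ hT₁ hu₁ hw₁ j₂ v₂ e₂ f₂ hT₂ hu₂ hw₂ h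
      exact h12 (by rw [hj, h, hee, hff])
    have hv13 : v₁ ≠ v₃ := by
      intro h
      obtain ⟨hj, hee, hff⟩ := hinj u w j₁ v₁ e₁ f₁ hT₁ hu₁ hw₁ j₃ v₃ e₃ f₃ hT₃ hu₃ hw₃ h
      exact h13 (by rw [hj, h, hee, hff])
    have hv23 : v₂ ≠ v₃ := by
      intro h
      obtain ⟨hj, hee, hff⟩ := hinj u w j₂ v₂ e₂ f₂ hT₂ hu₂ hw₂ j₃ v₃ e₃ f₃ hT₃ hu₃ hw₃ h
      exact h23 (by rw [hj, h, hee, hff])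
    have huw : u ≠ w := by
      intro h
      exact hef₁ (hline e₁ he₁ f₁ hf₁ u v₁ huv₁ hue₁ (by rw [h]; exact hwf₁) hve₁ hvf₁)
    have hE12 : e₁ ≠ e₂ := hEdist u w j₁ v₁ e₁ f₁ hT₁ hu₁ hw₁ j₂ v₂ e₂ f₂ hT₂ hu₂ hw₂ hv12
    have hE13 : e₁ ≠ e₃ := hEdist u w j₁ v₁ e₁ f₁ hT₁ hu₁ hw₁ j₃ v₃ e₃ f₃ hT₃ hu₃ hw₃ hv13
    have hE23 : e₂ ≠ e₃ := hEdist u w j₂ v₂ e₂ f₂ hT₂ hu₂ hw₂ j₃ v₃ e₃ f₃ hT₃ hu₃ hw₃ hv23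
    have hG12 : f₁ ≠ f₂ := hFdist u w j₁ v₁ e₁ f₁ hT₁ hu₁ hw₁ j₂ v₂ e₂ f₂ hT₂ hu₂ hw₂ hv12
    have hG13 : f₁ ≠ f₃ := hFdist u w j₁ v₁ e₁ f₁ hT₁ hu₁ hw₁ j₃ v₃ e₃ f₃ hT₃ hu₃ hw₃ hv13
    have hG23 : f₂ ≠ f₃ := hFdist u w j₂ v₂ e₂ f₂ hT₂ hu₂ hw₂ j₃ v₃ e₃ f₃ hT₃ hu₃ hw₃ hv23
    have hEF11 : e₁ ≠ f₁ := hef₁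
    have hEF12 : e₁ ≠ f₂ := hEFdist u w j₁ v₁ e₁ f₁ hT₁ hu₁ hw₁ j₂ v₂ e₂ f₂ hT₂ hu₂ hw₂
    have hEF13 : e₁ ≠ f₃ := hEFdist u w j₁ v₁ e₁ f₁ hT₁ hu₁ hw₁ j₃ v₃ e₃ f₃ hT₃ hu₃ hw₃
    have hEF21 : e₂ ≠ f₁ := hEFdist u w j₂ v₂ e₂ f₂ hT₂ hu₂ hw₂ j₁ v₁ e₁ f₁ hT₁ hu₁ hw₁
    have hEF22 : e₂ ≠ f₂ := hef₂
    have hEF23 : e₂ ≠ f₃ := hEFdist u w j₂ v₂ e₂ f₂ hT₂ hu₂ hw₂ j₃ v₃ e₃ f₃ hT₃ hu₃ hw₃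
    have hEF31 : e₃ ≠ f₁ := hEFdist u w j₃ v₃ e₃ f₃ hT₃ hu₃ hw₃ j₁ v₁ e₁ f₁ hT₁ hu₁ hw₁
    have hEF32 : e₃ ≠ f₂ := hEFdist u w j₃ v₃ e₃ f₃ hT₃ hu₃ hw₃ j₂ v₂ e₂ f₂ hT₂ hu₂ hw₂
    have hEF33 : e₃ ≠ f₃ := hef₃
    refine hK23 ⟨u, w, ![v₁, v₂, v₃], ![e₁, e₂, e₃], ![f₁, f₂, f₃],
      vec3_inj hv12 hv13 hv23, huw, ?_, ?_, ?_, ?_,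
      vec3_inj hE12 hE13 hE23, vec3_inj hG12 hG13 hG23, ?_, ?_⟩
    · intro i
      fin_cases i
      · simpa using huv₁
      · simpa using huv₂
      · simpa using huv₃
    · intro i
      fin_cases i
      · simpa using (Ne.symm hwv₁).symm
      · simpa using (Ne.symm hwv₂).symm
      · simpa using (Ne.symm hwv₃).symm
    · intro i
      fin_cases i
      · simpa using he₁
      · simpa using he₂
      · simpa using he₃
    · intro i
      fin_cases i
      · simpa using hf₁
      · simpa using hf₂
      · simpa using hf₃
    · intro i k
      fin_cases i <;> fin_cases k
      · simpa using hEF11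
      · simpa using hEF12
      · simpa using hEF13
      · simpa using hEF21
      · simpa using hEF22
      · simpa using hEF23
      · simpa using hEF31
      · simpa using hEF32
      · simpa using hEF33
    · intro i
      fin_cases i
      · exact ⟨by simpa using hue₁, by simpa using hve₁, by simpa using hwf₁,
          by simpa using hvf₁⟩
      · exact ⟨by simpa using hue₂, by simpa using hve₂, by simpa using hwf₂,
          by simpa using hvf₂⟩
      · exact ⟨by simpa using hue₃, by simpa using hve₃, by simpa using hwf₃,
          by simpa using hvf₃⟩
  -- the counting inequality in ℕ
  have hTub : T.card ≤ 2 * ((r * n) * (n - 1)) := by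
    have := Finset.card_le_mul_card_image_of_maps_to hmaps 2 hfib2
    rw [hPcard] at this
    exact this
  -- pass to the reals
  have hNpos : (0:ℝ) < n := by exact_mod_cast hnpos
  have hcast : ∀ v : V, ((hyperdeg H v * hyperdeg H v - hyperdeg H v : ℕ) : ℝ)
      = (hyperdeg H v : ℝ)^2 - (hyperdeg H v : ℝ) := by
    intro v
    have hle : hyperdeg H v ≤ hyperdeg H v * hyperdeg H v := by
      rcases Nat.eq_zero_or_pos (hyperdeg H v) with h | h
      · simp [h]
      · exact Nat.le_mul_of_pos_left _ h
    rw [Nat.cast_sub hle]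
    push_cast
    ring
  have c1 : (T.card : ℝ) = ((r:ℝ) - 1) * ∑ v : V, ((hyperdeg H v : ℝ)^2 - hyperdeg H v) := by
    rw [hTcard, Nat.cast_sum, Finset.mul_sum]
    refine Finset.sum_congr rfl fun v _ => ?_
    rw [Nat.cast_mul, hcast v, Nat.cast_sub (by omega : 1 ≤ r)]
    push_cast
    ring
  have c2 : (T.card : ℝ) ≤ 2 * ((r:ℝ) * n * ((n:ℝ) - 1)) := by
    have h0 : (T.card : ℝ) ≤ ((2 * ((r * n) * (n - 1)) : ℕ) : ℝ) := Nat.cast_le.mpr hTub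
    have h1 : ((2 * ((r * n) * (n - 1)) : ℕ) : ℝ) = 2 * ((r:ℝ) * n * ((n:ℝ) - 1)) := by
      rw [Nat.cast_mul, Nat.cast_mul, Nat.cast_sub (by omega : 1 ≤ n)]
      push_cast
      ring
    rw [h1] at h0
    exact h0
  -- Cauchy–Schwarz on each part
  have hCS : ∀ i : Fin r, (m:ℝ)^2 / n - m ≤
      ∑ v ∈ Finset.univ.filter (fun v => part v = i), ((hyperdeg H v : ℝ)^2 - hyperdeg H v) := by
    intro i
    have h1 : (∑ v ∈ Finset.univ.filter (fun v => part v = i), (hyperdeg H v : ℝ)) = m := by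
      rw [← Nat.cast_sum, hdegsum i]
    have h2 := sq_sum_le_card_mul_sum_sq
      (s := Finset.univ.filter (fun v => part v = i)) (f := fun v => (hyperdeg H v : ℝ))
    rw [h1, hparts i] at h2
    rw [Finset.sum_sub_distrib, h1]
    have h3 : (m:ℝ)^2 / n ≤ ∑ v ∈ Finset.univ.filter (fun v => part v = i),
        (hyperdeg H v : ℝ)^2 := by
      rw [div_le_iff₀ hNpos, mul_comm]
      exact h2
    linarith
  have hlow : (r:ℝ) * ((m:ℝ)^2 / n - m) ≤ ∑ v : V, ((hyperdeg H v : ℝ)^2 - hyperdeg H v) := by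
    calc (r:ℝ) * ((m:ℝ)^2 / n - m)
        = ∑ _i : Fin r, ((m:ℝ)^2 / n - m) := by
          rw [Finset.sum_const, Finset.card_univ, Fintype.card_fin, nsmul_eq_mul]
      _ ≤ ∑ i : Fin r, ∑ v ∈ Finset.univ.filter (fun v => part v = i),
            ((hyperdeg H v : ℝ)^2 - hyperdeg H v) := Finset.sum_le_sum (fun i _ => hCS i)
      _ = ∑ v : V, ((hyperdeg H v : ℝ)^2 - hyperdeg H v) :=
          Finset.sum_fiberwise _ _ _
  have hrR : (3:ℝ) ≤ (r:ℝ) := by exact_mod_cast hr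
  have hr1R : (0:ℝ) < (r:ℝ) - 1 := by linarith
  have hrposR : (0:ℝ) < (r:ℝ) := by linarith
  -- the main real inequality
  have main : ((r:ℝ) - 1) * ((r:ℝ) * ((m:ℝ)^2 / n - m)) ≤ 2 * ((r:ℝ) * n * ((n:ℝ) - 1)) := by
    calc ((r:ℝ) - 1) * ((r:ℝ) * ((m:ℝ)^2 / n - m))
        ≤ ((r:ℝ) - 1) * ∑ v : V, ((hyperdeg H v : ℝ)^2 - hyperdeg H v) :=
          mul_le_mul_of_nonneg_left hlow (by linarith)
      _ = (T.card : ℝ) := c1.symm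
      _ ≤ 2 * ((r:ℝ) * n * ((n:ℝ) - 1)) := c2
  have main2 : ((r:ℝ) - 1) * ((m:ℝ)^2 / n - m) ≤ 2 * (n:ℝ) * ((n:ℝ) - 1) := by
    refine le_of_mul_le_mul_left ?_ hrposR
    calc (r:ℝ) * (((r:ℝ) - 1) * ((m:ℝ)^2 / n - m))
        = ((r:ℝ) - 1) * ((r:ℝ) * ((m:ℝ)^2 / n - m)) := by ring
      _ ≤ 2 * ((r:ℝ) * n * ((n:ℝ) - 1)) := main
      _ = (r:ℝ) * (2 * (n:ℝ) * ((n:ℝ) - 1)) := by ring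
  have hprod : (n:ℝ) * (((m:ℝ) / n) * ((m:ℝ) / n - 1)) = (m:ℝ)^2 / n - m := by
    field_simp
  constructor
  · rw [ge_iff_le, Nat.cast_choose_two]
    calc (r:ℝ) * ((r:ℝ) - 1) * n * (((m:ℝ)/n) * ((m:ℝ)/n - 1)) / 2
        = ((r:ℝ) - 1) * ((r:ℝ) * ((m:ℝ)^2 / n - m)) / 2 := by
          rw [← hprod]; ring
      _ ≤ 2 * ((r:ℝ) * n * ((n:ℝ) - 1)) / 2 := by linarith
      _ = 2 * (r:ℝ) * ((n:ℝ) * ((n:ℝ) - 1) / 2) := by ring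
  · exact final_bound hrR hNpos main2
end

section
/- For every power q of an odd prime with q ≥ 3, there exists a 3-uniform 3-partite linear hypergraph with q² vertices in each part and q²(q-1) edges that contains no Berge triangle and no Berge-K_{2,3}. Consequently, the maximum number of edges z₃(n, {C₂, C₃, K_{2,3}}) in such a hypergraph with n vertices per part satisfies z₃(n, {C₂,C₃,K_{2,3}}) ≥ n^{3/2}(1 - o(1)) along the sequence n = q². -/
namespace Stmt14Aux

lemma fin3_pigeon : ∀ (p j0 j1 j2 : Fin 3), j0 ≠ p → j1 ≠ p → j2 ≠ p →
    j0 = j1 ∨ j0 = j2 ∨ j1 = j2 := by decide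

lemma fin3_unique : ∀ (p p' j j' : Fin 3), p ≠ p' → j ≠ p → j ≠ p' → j' ≠ p → j' ≠ p' →
    j = j' := by decide

variable {F : Type*} [Field F] {n : ℕ} (φ : F × F ≃ Fin n) (α : Fin 3 → F)

def edge (c d m : F) : Finset (Fin 3 × Fin n) :=
  Finset.univ.image (fun i => (i, φ (c + m * α i, d + m ^ 2 * α i)))

lemma mem_edge {c d m : F} {v : Fin 3 × Fin n} :
    v ∈ edge φ α c d m ↔ v.2 = φ (c + m * α v.1, d + m ^ 2 * α v.1) := by
  constructor
  · intro h
    simp only [edge, Finset.mem_image, Finset.mem_univ, true_and] at h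
    obtain ⟨i, hi⟩ := h
    rw [← hi]
  · intro h
    simp only [edge, Finset.mem_image, Finset.mem_univ, true_and]
    exact ⟨v.1, by rw [← h]⟩

lemma vert_eq {c d m : F} {v w : Fin 3 × Fin n} (hv : v ∈ edge φ α c d m)
    (hw : w ∈ edge φ α c d m) (h : v.1 = w.1) : v = w := by
  rw [mem_edge] at hv hw
  exact Prod.ext h (by rw [hv, hw, h])

lemma inter_eqs {c d m c' d' m' : F} {v : Fin 3 × Fin n} (hv : v ∈ edge φ α c d m)
    (hv' : v ∈ edge φ α c' d' m') :
    c + m * α v.1 = c' + m' * α v.1 ∧ d + m ^ 2 * α v.1 = d' + m' ^ 2 * α v.1 := by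
  rw [mem_edge] at hv hv'
  have h := φ.injective (hv.symm.trans hv')
  exact ⟨congrArg Prod.fst h, congrArg Prod.snd h⟩

lemma eq_of_same_m {c d m c' d' : F} {v : Fin 3 × Fin n} (hv : v ∈ edge φ α c d m)
    (hv' : v ∈ edge φ α c' d' m) : edge φ α c d m = edge φ α c' d' m := by
  obtain ⟨h1, h2⟩ := inter_eqs φ α hv hv'
  have hc : c = c' := by linear_combination h1
  have hd : d = d' := by linear_combination h2
  rw [hc, hd]

lemma filter_edge (c d m : F) (i : Fin 3) :
    (edge φ α c d m).filter (fun v => v.1 = i) =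
      {(i, φ (c + m * α i, d + m ^ 2 * α i))} := by
  ext v
  simp only [Finset.mem_filter, Finset.mem_singleton, mem_edge]
  constructor
  · rintro ⟨h2, h1⟩
    subst h1
    exact Prod.ext rfl h2
  · rintro rfl
    exact ⟨rfl, rfl⟩

lemma param_inj (hα : Function.Injective α) {c d m c' d' m' : F}
    (h : edge φ α c d m = edge φ α c' d' m') : c = c' ∧ d = d' ∧ m = m' := by
  have h0 : ((0 : Fin 3), φ (c + m * α 0, d + m ^ 2 * α 0)) ∈ edge φ α c d m :=
    (mem_edge φ α).2 rfl
  have h1 : ((1 : Fin 3), φ (c + m * α 1, d + m ^ 2 * α 1)) ∈ edge φ α c d m :=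
    (mem_edge φ α).2 rfl
  have h0' := h0; rw [h] at h0'
  have h1' := h1; rw [h] at h1'
  have e0 := inter_eqs φ α h0 h0'
  have e1 := inter_eqs φ α h1 h1'
  have e0c : c + m * α 0 = c' + m' * α 0 := e0.1
  have e1c : c + m * α 1 = c' + m' * α 1 := e1.1
  have e0d : d + m ^ 2 * α 0 = d' + m' ^ 2 * α 0 := e0.2
  have hα01 : α 0 ≠ α 1 := fun hc => (by decide : (0 : Fin 3) ≠ 1) (hα hc)
  have hmm : (m - m') * (α 0 - α 1) = 0 := by linear_combination e0c - e1c
  have hm : m = m' := by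
    rcases mul_eq_zero.1 hmm with h' | h'
    · exact sub_eq_zero.1 h'
    · exact absurd (sub_eq_zero.1 h') hα01
  subst hm
  have hc : c = c' := by linear_combination e0c
  have hd : d = d' := by linear_combination e0d
  exact ⟨hc, hd, rfl⟩

/-- The main construction, over an abstract finite field of order `q`. -/
lemma main {F : Type*} [Field F] [Fintype F] (q : ℕ) (hcard : Fintype.card F = q)
    (α : Fin 3 → F) (hα : Function.Injective α) (two_ne : (2 : F) ≠ 0) :
    ∃ H : Finset (Finset (Fin 3 × Fin (q ^ 2))),
      (∀ e ∈ H, ∀ i : Fin 3, (e.filter (fun v => v.1 = i)).card = 1) ∧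
      (∀ e ∈ H, ∀ f ∈ H, e ≠ f → (e ∩ f).card ≤ 1) ∧
      ¬ BergeTriangle H ∧
      ¬ BergeK2 3 H ∧
      H.card = q ^ 2 * (q - 1) := by
  classical
  have cardFF : Fintype.card (F × F) = q ^ 2 := by
    rw [Fintype.card_prod, hcard]; ring
  set φ : F × F ≃ Fin (q ^ 2) := Fintype.equivFinOfCardEq cardFF with hφdef
  set S : Finset (F × F × F) :=
    Finset.univ ×ˢ Finset.univ ×ˢ ({(0 : F)}ᶜ : Finset F) with hSdef
  set H : Finset (Finset (Fin 3 × Fin (q ^ 2))) :=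
    S.image (fun t => edge φ α t.1 t.2.1 t.2.2) with hHdef
  have memH : ∀ E ∈ H, ∃ c d m : F, E = edge φ α c d m := by
    intro E hE
    rw [hHdef, Finset.mem_image] at hE
    obtain ⟨⟨c, d, m⟩, _, rfl⟩ := hE
    exact ⟨c, d, m, rfl⟩
  refine ⟨H, ?_, ?_, ?_, ?_, ?_⟩
  · -- 3-partite
    intro E hE i
    obtain ⟨c, d, m, rfl⟩ := memH E hE
    rw [filter_edge]
    exact Finset.card_singleton _
  · -- linear
    intro E hE E' hE' hne
    obtain ⟨c, d, m, rfl⟩ := memH E hE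
    obtain ⟨c', d', m', rfl⟩ := memH E' hE'
    by_contra hcard2
    push_neg at hcard2
    obtain ⟨v, hv, w, hw, hvw⟩ := Finset.one_lt_card.1 hcard2
    rw [Finset.mem_inter] at hv hw
    by_cases h1 : v.1 = w.1
    · exact hvw (vert_eq φ α hv.1 hw.1 h1)
    · have hcv := (inter_eqs φ α hv.1 hv.2).1
      have hcw := (inter_eqs φ α hw.1 hw.2).1
      have hmm : (m - m') * (α v.1 - α w.1) = 0 := by linear_combination hcv - hcw
      rcases mul_eq_zero.1 hmm with h' | h'
      · have hm : m = m' := sub_eq_zero.1 h'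
        subst hm
        exact hne (eq_of_same_m φ α hv.1 hv.2)
      · exact h1 (hα (sub_eq_zero.1 h'))
  · -- no Berge triangle
    rintro ⟨v₁, v₂, v₃, e₁, e₂, e₃, hv12, hv23, hv13, he12, he23, he13,
      h1, h2, h3, m11, m21, m22, m32, m33, m13⟩
    obtain ⟨c₁, d₁, m₁, rfl⟩ := memH e₁ h1
    obtain ⟨c₂, d₂, m₂, rfl⟩ := memH e₂ h2
    obtain ⟨c₃, d₃, m₃, rfl⟩ := memH e₃ h3
    by_cases p23 : v₂.1 = v₃.1
    · exact hv23 (vert_eq φ α m22 m32 p23)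
    by_cases p21 : v₂.1 = v₁.1
    · exact hv12 (vert_eq φ α m11 m21 p21.symm)
    by_cases p31 : v₃.1 = v₁.1
    · exact hv13 (vert_eq φ α m13 m33 p31.symm)
    have hm12 : m₁ ≠ m₂ := by
      rintro rfl; exact he12 (eq_of_same_m φ α m21 m22)
    have hm13 : m₁ ≠ m₃ := by
      rintro rfl; exact he13 (eq_of_same_m φ α m11 m13)
    obtain ⟨A1, A2⟩ := inter_eqs φ α m21 m22
    obtain ⟨B1, B2⟩ := inter_eqs φ α m32 m33
    obtain ⟨C1, C2⟩ := inter_eqs φ α m11 m13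
    have key : (m₂ - m₁) * (m₁ - m₃) * (α v₂.1 - α v₁.1) = 0 := by
      linear_combination (m₂ + m₃) * (A1 + B1 - C1) - (A2 + B2 - C2)
    rcases mul_eq_zero.1 key with h' | h'
    · rcases mul_eq_zero.1 h' with h'' | h''
      · exact hm12 (sub_eq_zero.1 h'').symm
      · exact hm13 (sub_eq_zero.1 h'')
    · exact p21 (hα (sub_eq_zero.1 h'))
  · -- no Berge K_{2,3}
    rintro ⟨x, y, v, e, f, hvinj, hxy, hxv, hyv, heH, hfH, heinj, hfinj, hef, hall⟩
    have hE := fun i => memH (e i) (heH i)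
    have hF := fun i => memH (f i) (hfH i)
    choose ce de me hee using hE
    choose cf df nf hff using hF
    have hxe : ∀ i, x ∈ edge φ α (ce i) (de i) (me i) := fun i => (hee i) ▸ (hall i).1
    have hve : ∀ i, v i ∈ edge φ α (ce i) (de i) (me i) := fun i => (hee i) ▸ (hall i).2.1
    have hyf : ∀ i, y ∈ edge φ α (cf i) (df i) (nf i) := fun i => (hff i) ▸ (hall i).2.2.1
    have hvf : ∀ i, v i ∈ edge φ α (cf i) (df i) (nf i) := fun i => (hff i) ▸ (hall i).2.2.2
    have hjx : ∀ i, (v i).1 ≠ x.1 := fun i h => hxv i (vert_eq φ α (hve i) (hxe i) h).symm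
    have hjy : ∀ i, (v i).1 ≠ y.1 := fun i h => hyv i (vert_eq φ α (hvf i) (hyf i) h).symm
    have hax : ∀ i, α x.1 - α (v i).1 ≠ 0 := fun i h => hjx i (hα (sub_eq_zero.1 h)).symm
    have hay : ∀ i, α y.1 - α (v i).1 ≠ 0 := fun i h => hjy i (hα (sub_eq_zero.1 h)).symm
    -- equations from x ∈ e i and y ∈ f i
    have hxeq : ∀ i, (φ.symm x.2).1 = ce i + me i * α x.1 ∧
        (φ.symm x.2).2 = de i + me i ^ 2 * α x.1 := by
      intro i
      have h := (mem_edge φ α).1 (hxe i)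
      have h2 := congrArg φ.symm h
      rw [Equiv.symm_apply_apply] at h2
      exact ⟨congrArg Prod.fst h2, congrArg Prod.snd h2⟩
    have hyeq : ∀ i, (φ.symm y.2).1 = cf i + nf i * α y.1 ∧
        (φ.symm y.2).2 = df i + nf i ^ 2 * α y.1 := by
      intro i
      have h := (mem_edge φ α).1 (hyf i)
      have h2 := congrArg φ.symm h
      rw [Equiv.symm_apply_apply] at h2
      exact ⟨congrArg Prod.fst h2, congrArg Prod.snd h2⟩
    have hieq := fun i => inter_eqs φ α (hve i) (hvf i)
    have EA : ∀ i, me i * (α x.1 - α (v i).1) - nf i * (α y.1 - α (v i).1)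
        = (φ.symm x.2).1 - (φ.symm y.2).1 := by
      intro i
      linear_combination (hyeq i).1 - (hxeq i).1 - (hieq i).1
    have EB : ∀ i, me i ^ 2 * (α x.1 - α (v i).1) - nf i ^ 2 * (α y.1 - α (v i).1)
        = (φ.symm x.2).2 - (φ.symm y.2).2 := by
      intro i
      linear_combination (hyeq i).2 - (hxeq i).2 - (hieq i).2
    -- the slope determines the edge through x (resp. y)
    have meinj : ∀ i k, me i = me k → i = k := by
      intro i k h
      apply heinj
      rw [hee i, hee k]
      have hc : ce i = ce k := by
        linear_combination (hxeq k).1 - (hxeq i).1 - α x.1 * h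
      have hd : de i = de k := by
        linear_combination (hxeq k).2 - (hxeq i).2 - α x.1 * (me i + me k) * h
      rw [hc, hd, h]
    have nfinj : ∀ i k, nf i = nf k → i = k := by
      intro i k h
      apply hfinj
      rw [hff i, hff k]
      have hc : cf i = cf k := by
        linear_combination (hyeq k).1 - (hyeq i).1 - α y.1 * h
      have hd : df i = df k := by
        linear_combination (hyeq k).2 - (hyeq i).2 - α y.1 * (nf i + nf k) * h
      rw [hc, hd, h]
    by_cases hpp : x.1 = y.1
    · -- x and y in the same part
      have hba : α y.1 = α x.1 := congrArg α hpp.symm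
      by_cases hU : (φ.symm x.2).1 - (φ.symm y.2).1 = 0
      · -- then x = y, contradiction
        have h0 : (me 0 - nf 0) * (α x.1 - α (v 0).1) = 0 := by
          linear_combination EA 0 + nf 0 * hba + hU
        have hmn : me 0 - nf 0 = 0 := (mul_eq_zero.1 h0).resolve_right (hax 0)
        have hW : (φ.symm x.2).2 - (φ.symm y.2).2 = 0 := by
          linear_combination (me 0 + nf 0) * (α x.1 - α (v 0).1) * hmn - EB 0 - nf 0 ^ 2 * hba
        apply hxy
        have hu' : (φ.symm x.2).1 = (φ.symm y.2).1 := by linear_combination hU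
        have hw' : (φ.symm x.2).2 = (φ.symm y.2).2 := by linear_combination hW
        have h2 : x.2 = y.2 := φ.symm.injective (Prod.ext hu' hw')
        exact Prod.ext hpp h2
      · -- pigeonhole: two of the middle vertices in the same part
        have key : ∀ i k : Fin 3, i ≠ k → (v i).1 = (v k).1 → False := by
          intro i k hik hj
          have hγ : α (v i).1 = α (v k).1 := congrArg α hj
          have hdi : (me i - nf i) * (α x.1 - α (v i).1)
              = (φ.symm x.2).1 - (φ.symm y.2).1 := by
            linear_combination EA i + nf i * hba
          have hdk : (me k - nf k) * (α x.1 - α (v k).1)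
              = (φ.symm x.2).1 - (φ.symm y.2).1 := by
            linear_combination EA k + nf k * hba
          have hne1 : me i - nf i ≠ 0 := by
            intro h0; apply hU; rw [← hdi, h0, zero_mul]
          have hdm0 : ((me i - nf i) - (me k - nf k)) * (α x.1 - α (v i).1) = 0 := by
            linear_combination hdi - hdk + (me k - nf k) * hγ
          have hdm : me i - nf i = me k - nf k :=
            sub_eq_zero.1 ((mul_eq_zero.1 hdm0).resolve_right (hax i))
          have hsi : (me i - nf i) * ((me i + nf i) * (α x.1 - α (v i).1))
              = (φ.symm x.2).2 - (φ.symm y.2).2 := by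
            linear_combination EB i + nf i ^ 2 * hba
          have hsk : (me k - nf k) * ((me k + nf k) * (α x.1 - α (v k).1))
              = (φ.symm x.2).2 - (φ.symm y.2).2 := by
            linear_combination EB k + nf k ^ 2 * hba
          have hs0 : (me i - nf i) * (((me i + nf i) - (me k + nf k))
              * (α x.1 - α (v i).1)) = 0 := by
            linear_combination hsi - hsk + (me k - nf k) * (me k + nf k) * hγ
              - (me k + nf k) * (α x.1 - α (v i).1) * hdm
          have hs1 := (mul_eq_zero.1 hs0).resolve_left hne1
          have hs2 : (me i + nf i) - (me k + nf k) = 0 :=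
            (mul_eq_zero.1 hs1).resolve_right (hax i)
          have h2m : (2 : F) * me i = 2 * me k := by linear_combination hdm + hs2
          exact hik (meinj i k (mul_left_cancel₀ two_ne h2m))
        rcases fin3_pigeon x.1 ((v 0).1) ((v 1).1) ((v 2).1)
          (hjx 0) (hjx 1) (hjx 2) with h | h | h
        · exact key 0 1 (by decide) h
        · exact key 0 2 (by decide) h
        · exact key 1 2 (by decide) h
    · -- x and y in different parts: all three middle vertices in the same part
      have jeq : ∀ i, α (v i).1 = α (v 0).1 := fun i =>
        congrArg α (fin3_unique x.1 y.1 ((v i).1) ((v 0).1) hpp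
          (hjx i) (hjy i) (hjx 0) (hjy 0))
      have EA' : ∀ i, me i * (α x.1 - α (v 0).1) - nf i * (α y.1 - α (v 0).1)
          = (φ.symm x.2).1 - (φ.symm y.2).1 := by
        intro i
        linear_combination EA i + (me i - nf i) * jeq i
      have EB' : ∀ i, me i ^ 2 * (α x.1 - α (v 0).1) - nf i ^ 2 * (α y.1 - α (v 0).1)
          = (φ.symm x.2).2 - (φ.symm y.2).2 := by
        intro i
        linear_combination EB i + (me i ^ 2 - nf i ^ 2) * jeq i
      have Q : ∀ i, (((φ.symm x.2).1 - (φ.symm y.2).1) + nf i * (α y.1 - α (v 0).1)) ^ 2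
          = (α x.1 - α (v 0).1) * ((φ.symm x.2).2 - (φ.symm y.2).2)
            + (α x.1 - α (v 0).1) * (α y.1 - α (v 0).1) * nf i ^ 2 := by
        intro i
        linear_combination (α x.1 - α (v 0).1) * EB' i
          - (me i * (α x.1 - α (v 0).1) + ((φ.symm x.2).1 - (φ.symm y.2).1)
              + nf i * (α y.1 - α (v 0).1)) * EA' i
      have hnf : ∀ i k : Fin 3, i ≠ k → nf i ≠ nf k := fun i k hik h => hik (nfinj i k h)
      have L : ∀ i k : Fin 3, i ≠ k →
          ((α y.1 - α (v 0).1) ^ 2 - (α x.1 - α (v 0).1) * (α y.1 - α (v 0).1)) * (nf i + nf k)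
            + 2 * ((φ.symm x.2).1 - (φ.symm y.2).1) * (α y.1 - α (v 0).1) = 0 := by
        intro i k hik
        have h0 : (nf i - nf k) * (((α y.1 - α (v 0).1) ^ 2
            - (α x.1 - α (v 0).1) * (α y.1 - α (v 0).1)) * (nf i + nf k)
            + 2 * ((φ.symm x.2).1 - (φ.symm y.2).1) * (α y.1 - α (v 0).1)) = 0 := by
          linear_combination Q i - Q k
        exact (mul_eq_zero.1 h0).resolve_left (sub_ne_zero.2 (hnf i k hik))
      have final : (α y.1 - α (v 0).1)
          * ((α y.1 - α (v 0).1) - (α x.1 - α (v 0).1)) * (nf 1 - nf 2) = 0 := by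
        linear_combination L 0 1 (by decide) - L 0 2 (by decide)
      have hBA : (α y.1 - α (v 0).1) - (α x.1 - α (v 0).1) ≠ 0 := by
        intro h
        have h2 : α x.1 = α y.1 := by linear_combination -h
        exact hpp (hα h2)
      rcases mul_eq_zero.1 final with h' | h'
      · rcases mul_eq_zero.1 h' with h'' | h''
        · exact hay 0 h''
        · exact hBA h''
      · exact hnf 1 2 (by decide) (sub_eq_zero.1 h')
  · -- edge count
    have hinj : Function.Injective
        (fun t : F × F × F => edge φ α t.1 t.2.1 t.2.2) := by
      rintro ⟨c, d, m⟩ ⟨c', d', m'⟩ h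
      obtain ⟨h1, h2, h3⟩ := param_inj φ α hα h
      simp only [Prod.mk.injEq]
      exact ⟨h1, h2, h3⟩
    rw [hHdef, Finset.card_image_of_injective _ hinj, hSdef,
      Finset.card_product, Finset.card_product, Finset.card_compl,
      Finset.card_singleton, Finset.card_univ, hcard, pow_two, mul_assoc]

end Stmt14Aux

open Stmt14Aux in
/-- For every power `q ≥ 3` of an odd prime there is a 3-uniform 3-partite linear
hypergraph with `q²` vertices in each part and `q²(q-1)` edges containing no
Berge triangle and no Berge-K_{2,3}. -/
theorem stmt_14 (q : ℕ) (hq3 : 3 ≤ q)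
    (hq : ∃ p k : ℕ, p.Prime ∧ Odd p ∧ 0 < k ∧ q = p ^ k) :
    ∃ H : Finset (Finset (Fin 3 × Fin (q ^ 2))),
      (∀ e ∈ H, ∀ i : Fin 3, (e.filter (fun v => v.1 = i)).card = 1) ∧
      (∀ e ∈ H, ∀ f ∈ H, e ≠ f → (e ∩ f).card ≤ 1) ∧
      ¬ BergeTriangle H ∧
      ¬ BergeK2 3 H ∧
      H.card = q ^ 2 * (q - 1) := by
  obtain ⟨p, k, hp, hodd, hk, rfl⟩ := hq
  haveI : Fact p.Prime := ⟨hp⟩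
  haveI : Fintype (GaloisField p k) := Fintype.ofFinite _
  have cardF : Fintype.card (GaloisField p k) = p ^ k := by
    rw [← Nat.card_eq_fintype_card]
    exact GaloisField.card p k hk.ne'
  have hp3 : 3 ≤ p := by
    have h2 := hp.two_le
    have hne2 : p ≠ 2 := by
      rintro rfl
      simp [Nat.odd_iff] at hodd
    omega
  have two_ne : (2 : GaloisField p k) ≠ 0 := by
    intro h
    have h2 : ((2 : ℕ) : GaloisField p k) = 0 := by push_cast; exact h
    have h3 := (CharP.cast_eq_zero_iff (GaloisField p k) p 2).1 h2
    have h4 := Nat.le_of_dvd (by norm_num) h3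
    omega
  have one_ne : (1 : GaloisField p k) ≠ 0 := one_ne_zero
  have h21 : (2 : GaloisField p k) ≠ 1 := by
    intro h
    exact one_ne (by linear_combination h)
  have hα : Function.Injective (![0, 1, 2] : Fin 3 → GaloisField p k) := by
    intro i j hij
    fin_cases i <;> fin_cases j <;> simp_all
  exact main (p ^ k) cardF _ hα two_ne
end

section
/- Let r ≥ 3 and let l satisfy 2l + 1 ≥ r. If q ≥ 2lr³ is a power of an odd prime, then there exist r distinct elements α₁, …, α_r ∈ F_q and l distinct nonzero elements m₁, …, m_l ∈ F_q such that m_s(α_k - α_i) ≠ m_t(α_k - α_j) for all 1 ≤ s, t ≤ l and all distinct i, j, k ∈ {1, …, r}. -/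
theorem stmt_15 (r l q : ℕ) (hr : 3 ≤ r) (hl : r ≤ 2 * l + 1)
    (hq : ∃ p k : ℕ, p.Prime ∧ Odd p ∧ 0 < k ∧ q = p ^ k)
    (hql : 2 * l * r ^ 3 ≤ q)
    (F : Type*) [Field F] [Fintype F] (hcard : Fintype.card F = q) :
    ∃ (α : Fin r → F) (m : Fin l → F),
      Function.Injective α ∧ Function.Injective m ∧ (∀ s, m s ≠ 0) ∧
      ∀ (s t : Fin l) (i j k : Fin r), i ≠ j → j ≠ k → i ≠ k →
        m s * (α k - α i) ≠ m t * (α k - α j) := by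
  classical
  have hl1 : 1 ≤ l := by omega
  have hr3 : 27 ≤ r ^ 3 := by
    calc (27 : ℕ) = 3 ^ 3 := by norm_num
    _ ≤ r ^ 3 := Nat.pow_le_pow_left hr 3
  have hrq : r ≤ q := by
    have h54 : 2 * l * 27 ≤ 2 * l * r ^ 3 := Nat.mul_le_mul_left _ hr3
    have hb : r ≤ 2 * l * 27 := by omega
    exact hb.trans (h54.trans hql)
  obtain ⟨α⟩ : Nonempty (Fin r ↪ F) := by
    rw [Function.Embedding.nonempty_iff_card_le]
    simpa [hcard]
  have hαinj : Function.Injective (α : Fin r → F) := α.injective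
  have key : ∀ n, n ≤ l → ∃ m : Fin n → F, Function.Injective m ∧ (∀ s, m s ≠ 0) ∧
      ∀ (s t : Fin n) (i j k : Fin r), i ≠ j → j ≠ k → i ≠ k →
        m s * (α k - α i) ≠ m t * (α k - α j) := by
    intro n
    induction n with
    | zero =>
      intro _
      exact ⟨fun s => s.elim0, fun s => s.elim0, fun s => s.elim0, fun s => s.elim0⟩
    | succ n ih =>
      intro hn
      obtain ⟨m, hmi, hm0, hmain⟩ := ih (by omega)
      set f : Fin n × Fin r × Fin r × Fin r → F :=
        fun p => m p.1 * (α p.2.2.2 - α p.2.2.1) * (α p.2.2.2 - α p.2.1)⁻¹ with hf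
      set S : Finset F := insert 0 (Finset.image f Finset.univ) with hS
      have hScard : S.card < Fintype.card F := by
        have h1 : S.card ≤ (Finset.image f Finset.univ).card + 1 :=
          Finset.card_insert_le _ _
        have h2 : (Finset.image f Finset.univ).card ≤ n * (r * (r * r)) := by
          have := Finset.card_image_le
            (s := (Finset.univ : Finset (Fin n × Fin r × Fin r × Fin r))) (f := f)
          simpa using this
        have h5 : (n + 1) * r ^ 3 ≤ l * r ^ 3 := Nat.mul_le_mul_right _ hn
        have h4 : 1 + n * (r * (r * r)) < q := by
          have hrr : n * (r * (r * r)) = n * r ^ 3 := by ring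
          rw [hrr]
          nlinarith [h5, hr3, hql]
        rw [hcard]
        omega
      obtain ⟨x, hx⟩ : ∃ x, x ∉ S := by
        by_contra h
        push_neg at h
        have hsub : (Finset.univ : Finset F) ⊆ S := fun y _ => h y
        have := Finset.card_le_card hsub
        rw [Finset.card_univ] at this
        omega
      have hx0 : x ≠ 0 := fun h => hx (by simp [hS, h])
      have hxf : ∀ z i j k, x ≠ f (z, i, j, k) := by
        intro z i j k h
        exact hx (by
          rw [hS]
          exact Finset.mem_insert_of_mem
            (Finset.mem_image.mpr ⟨_, Finset.mem_univ _, h.symm⟩))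
      have hxm : ∀ z : Fin n, x ≠ m z := by
        intro z h
        have h01 : (⟨0, by omega⟩ : Fin r) ≠ (⟨1, by omega⟩ : Fin r) := by
          simp [Fin.ext_iff]
        have hαne : α ⟨1, by omega⟩ - α ⟨0, by omega⟩ ≠ 0 :=
          sub_ne_zero.mpr (fun he => h01 (hαinj he).symm)
        have hfeq : f (z, ⟨0, by omega⟩, ⟨0, by omega⟩, ⟨1, by omega⟩) = m z := by
          simp only [hf]
          exact mul_inv_cancel_right₀ hαne (m z)
        exact hxf z _ _ _ (h.trans hfeq.symm)
      refine ⟨Fin.snoc m x, ?_, ?_, ?_⟩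
      · intro a b hab
        rcases Fin.eq_castSucc_or_eq_last a with ⟨a', rfl⟩ | rfl <;>
          rcases Fin.eq_castSucc_or_eq_last b with ⟨b', rfl⟩ | rfl
        · rw [Fin.snoc_castSucc, Fin.snoc_castSucc] at hab
          exact congrArg Fin.castSucc (hmi hab)
        · rw [Fin.snoc_castSucc, Fin.snoc_last] at hab
          exact absurd hab.symm (hxm a')
        · rw [Fin.snoc_castSucc, Fin.snoc_last] at hab
          exact absurd hab (hxm b')
        · rfl
      · intro s
        rcases Fin.eq_castSucc_or_eq_last s with ⟨s', rfl⟩ | rfl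
        · rw [Fin.snoc_castSucc]; exact hm0 s'
        · rw [Fin.snoc_last]; exact hx0
      · intro s t i j k hij hjk hik
        have hki : α k - α i ≠ 0 := sub_ne_zero.mpr (fun he => hik (hαinj he).symm)
        have hkj : α k - α j ≠ 0 := sub_ne_zero.mpr (fun he => hjk (hαinj he).symm)
        rcases Fin.eq_castSucc_or_eq_last s with ⟨s', rfl⟩ | rfl <;>
          rcases Fin.eq_castSucc_or_eq_last t with ⟨t', rfl⟩ | rfl
        · rw [Fin.snoc_castSucc, Fin.snoc_castSucc]
          exact hmain s' t' i j k hij hjk hik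
        · rw [Fin.snoc_castSucc, Fin.snoc_last]
          intro h
          apply hxf s' j i k
          simp only [hf]
          rw [eq_mul_inv_iff_mul_eq₀ hkj]
          exact h.symm
        · rw [Fin.snoc_last, Fin.snoc_castSucc]
          intro h
          apply hxf t' i j k
          simp only [hf]
          rw [eq_mul_inv_iff_mul_eq₀ hki]
          exact h
        · rw [Fin.snoc_last]
          intro h
          have h2 := mul_left_cancel₀ hx0 h
          exact hij (hαinj (by linear_combination -h2))
  obtain ⟨m, hmi, hm0, hmain⟩ := key l le_rfl
  exact ⟨α, m, hαinj, hmi, hm0, hmain⟩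
end

section
/- Let F_q be a finite field of odd order, α₁, …, α_r distinct elements of F_q, m₁, …, m_l distinct nonzero elements of F_q satisfying m_s(α_k - α_i) ≠ m_t(α_k - α_j) for all s, t and all distinct i, j, k. Fix distinct indices i, j, k. Define a tripartite graph on three copies of F_q × F_q where a vertex (u,v) in copy p is adjacent to (u',v') in copy p' (p ≠ p') iff there exist s and nonzero a with u' = u + m_s(α_{p'} - α_p)a, v' = v + m_s(α_{p'} - α_p)a². Then there is no K_{2, 2l²+1} with one of the two degree-(2l²+1) vertices in copy i, the other in copy j, and 2l² + 1 common neighbors in copy k. -/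
/-- In the tripartite link graph `H(Vᵢ, Vⱼ, V_k)` there is no `K_{2, 2l²+1}` with
one center in copy `i`, the other in copy `j`, and `2l² + 1` common neighbors in
copy `k`. -/
theorem stmt_17 {F : Type*} [Field F] [Fintype F] [DecidableEq F]
    (hodd : Odd (Fintype.card F)) {r l : ℕ}
    (α : Fin r → F) (m : Fin l → F)
    (hα : Function.Injective α) (hm : Function.Injective m) (hm0 : ∀ s, m s ≠ 0)
    (hcond : ∀ (s t : Fin l) (i j k : Fin r), i ≠ j → j ≠ k → i ≠ k →
      m s * (α k - α i) ≠ m t * (α k - α j))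
    (i j k : Fin r) (hij : i ≠ j) (hjk : j ≠ k) (hik : i ≠ k) :
    ¬ ∃ (u v : F × F) (W : Finset (F × F)), W.card = 2 * l ^ 2 + 1 ∧
      ∀ w ∈ W,
        (∃ (s : Fin l) (a : F), a ≠ 0 ∧
          w.1 = u.1 + m s * (α k - α i) * a ∧ w.2 = u.2 + m s * (α k - α i) * a ^ 2) ∧
        (∃ (s : Fin l) (a : F), a ≠ 0 ∧
          w.1 = v.1 + m s * (α k - α j) * a ∧ w.2 = v.2 + m s * (α k - α j) * a ^ 2) := by
  rintro ⟨u, v, W, hcard, hW⟩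
  classical
  rcases Nat.eq_zero_or_pos l with hl | hl
  · subst hl
    have hW1 : W.Nonempty := by rw [← Finset.card_pos, hcard]; omega
    obtain ⟨w, hw⟩ := hW1
    obtain ⟨⟨s, _⟩, _⟩ := hW w hw
    exact s.elim0
  haveI : NeZero l := ⟨hl.ne'⟩
  have key : ∀ w ∈ W, ∃ p : Fin l × Fin l, ∃ a a' : F,
      w.1 = u.1 + m p.1 * (α k - α i) * a ∧ w.2 = u.2 + m p.1 * (α k - α i) * a ^ 2 ∧
      w.1 = v.1 + m p.2 * (α k - α j) * a' ∧ w.2 = v.2 + m p.2 * (α k - α j) * a' ^ 2 := by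
    intro w hw
    obtain ⟨⟨s, a, _, h1, h2⟩, ⟨t, a', _, h3, h4⟩⟩ := hW w hw
    exact ⟨(s, t), a, a', h1, h2, h3, h4⟩
  choose! p pa pa' hp using key
  have hmaps : ∀ w ∈ W, p w ∈ (Finset.univ : Finset (Fin l × Fin l)) :=
    fun _ _ => Finset.mem_univ _
  have hlt : (Finset.univ : Finset (Fin l × Fin l)).card * 2 < W.card := by
    simp only [Finset.card_univ, Fintype.card_prod, Fintype.card_fin, hcard]
    nlinarith
  obtain ⟨y, -, hy⟩ := Finset.exists_lt_card_fiber_of_mul_lt_card_of_maps_to hmaps hlt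
  rw [Finset.two_lt_card_iff] at hy
  obtain ⟨w1, w2, w3, hw1, hw2, hw3, h12, h13, h23⟩ := hy
  simp only [Finset.mem_filter] at hw1 hw2 hw3
  set b := m y.1 * (α k - α i) with hbdef
  set c := m y.2 * (α k - α j) with hcdef
  have hb : b ≠ 0 := mul_ne_zero (hm0 _) (sub_ne_zero.mpr fun h => hik (hα h).symm)
  have hbc : c - b ≠ 0 := sub_ne_zero.mpr fun h => hcond y.1 y.2 i j k hij hjk hik h.symm
  obtain ⟨e11, e12, e13, e14⟩ := hw1.2 ▸ hp w1 hw1.1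
  obtain ⟨e21, e22, e23, e24⟩ := hw2.2 ▸ hp w2 hw2.1
  obtain ⟨e31, e32, e33, e34⟩ := hw3.2 ▸ hp w3 hw3.1
  -- distinct first coordinates
  have hx : ∀ w w' : F × F,
      w.1 = u.1 + b * pa w → w.2 = u.2 + b * pa w ^ 2 →
      w'.1 = u.1 + b * pa w' → w'.2 = u.2 + b * pa w' ^ 2 →
      w ≠ w' → w.1 ≠ w'.1 := by
    intro w w' a1 a2 a3 a4 hne hx1
    apply hne
    have haa : pa w = pa w' := by
      have : b * pa w = b * pa w' := by rw [a1, a3] at hx1; linear_combination hx1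
      exact mul_left_cancel₀ hb this
    have : w.2 = w'.2 := by rw [a2, a4, haa]
    exact Prod.ext (by rw [a1, a3, haa]) this
  have hx12 : w1.1 ≠ w2.1 := hx w1 w2 e11 e12 e21 e22 h12
  have hx13 : w1.1 ≠ w3.1 := hx w1 w3 e11 e12 e31 e32 h13
  have hx23 : w2.1 ≠ w3.1 := hx w2 w3 e21 e22 e31 e32 h23
  -- quadratic equation satisfied by each first coordinate
  have hq : ∀ w : F × F, ∀ a a' : F,
      w.1 = u.1 + b * a → w.2 = u.2 + b * a ^ 2 →
      w.1 = v.1 + c * a' → w.2 = v.2 + c * a' ^ 2 →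
      c * (w.1 - u.1) ^ 2 - b * (w.1 - v.1) ^ 2 = b * c * (v.2 - u.2) := by
    intro w a a' h1 h2 h3 h4
    linear_combination (c * (w.1 - u.1) + c * b * a) * h1 - c * b * h2 -
      (b * (w.1 - v.1) + b * c * a') * h3 + b * c * h4
  have q1 := hq w1 _ _ e11 e12 e13 e14
  have q2 := hq w2 _ _ e21 e22 e23 e24
  have q3 := hq w3 _ _ e31 e32 e33 e34
  have f12 : (w1.1 - w2.1) * ((c - b) * (w1.1 + w2.1) - 2 * (c * u.1 - b * v.1)) = 0 := by
    linear_combination q1 - q2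
  have f13 : (w1.1 - w3.1) * ((c - b) * (w1.1 + w3.1) - 2 * (c * u.1 - b * v.1)) = 0 := by
    linear_combination q1 - q3
  have g12 := (mul_eq_zero.mp f12).resolve_left (sub_ne_zero.mpr hx12)
  have g13 := (mul_eq_zero.mp f13).resolve_left (sub_ne_zero.mpr hx13)
  have : (c - b) * (w2.1 - w3.1) = 0 := by linear_combination g12 - g13
  exact (mul_ne_zero hbc (sub_ne_zero.mpr hx23)) this
end

section
/- For every power q of an odd prime with q ≥ r and every r ≥ 3, setting n = rq², the maximum number of edges in an n-vertex r-uniform hypergraph that is linear, Berge-C₃-free, and Berge-K_{2,2r-3}-free is at least q²(q - 1) ≥ n^{3/2}/r^{3/2} - n/r. -/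
set_option linter.unusedSectionVars false
set_option maxHeartbeats 1000000

section Construction
variable {F : Type} [Field F] [Fintype F] [DecidableEq F] {r : ℕ}

/-- The edge of the algebraic construction indexed by a point `P = (d, w₁, w₂) ∈ F³`. -/
def Econ (α : Fin r → F) (P : F × F × F) : Finset (Fin r × F × F) :=
  Finset.univ.image fun i => (i, P.2.1 - α i * P.1, P.2.2 - α i * P.1 ^ 2)

/-- The algebraic construction hypergraph. -/
def Hcon (α : Fin r → F) : Finset (Finset (Fin r × F × F)) :=
  (Finset.univ : Finset (F × F × F)).image (Econ α)

lemma mem_Econ {α : Fin r → F} {w : Fin r × F × F} {P : F × F × F} :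
    w ∈ Econ α P ↔ w.2.1 = P.2.1 - α w.1 * P.1 ∧ w.2.2 = P.2.2 - α w.1 * P.1 ^ 2 := by
  obtain ⟨i, u1, u2⟩ := w
  obtain ⟨d, w1, w2⟩ := P
  simp only [Econ, Finset.mem_image, Finset.mem_univ, true_and, Prod.mk.injEq]
  constructor
  · rintro ⟨j, rfl, h1, h2⟩
    exact ⟨h1.symm, h2.symm⟩
  · rintro ⟨h1, h2⟩
    exact ⟨i, rfl, h1.symm, h2.symm⟩

lemma card_Econ (α : Fin r → F) (P : F × F × F) : (Econ α P).card = r := by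
  rw [Econ, Finset.card_image_of_injective _ (fun a b h => (Prod.ext_iff.mp h).1),
    Finset.card_univ, Fintype.card_fin]

/-- Two distinct vertices of a common edge are in distinct layers. -/
lemma layer_eq_of {α : Fin r → F} {P : F × F × F} {w w' : Fin r × F × F}
    (h1 : w ∈ Econ α P) (h2 : w' ∈ Econ α P) (h : w.1 = w'.1) : w = w' := by
  rw [mem_Econ] at h1 h2
  refine Prod.ext_iff.mpr ⟨h, Prod.ext_iff.mpr ⟨?_, ?_⟩⟩
  · rw [h1.1, h2.1, h]
  · rw [h1.2, h2.2, h]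

/-- Two distinct edges through a common vertex have distinct `d`-coordinates. -/
lemma P_eq_of {α : Fin r → F} {P P' : F × F × F} {w : Fin r × F × F}
    (h1 : w ∈ Econ α P) (h2 : w ∈ Econ α P') (hd : P.1 = P'.1) : P = P' := by
  rw [mem_Econ] at h1 h2
  have e1 : P.2.1 = P'.2.1 := by
    have h := h1.1.symm.trans h2.1
    linear_combination h + α w.1 * hd
  have e2 : P.2.2 = P'.2.2 := by
    have h := h1.2.symm.trans h2.2
    linear_combination h + α w.1 * (P.1 + P'.1) * hd
  exact Prod.ext_iff.mpr ⟨hd, Prod.ext_iff.mpr ⟨e1, e2⟩⟩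

lemma d_ne_of {α : Fin r → F} {P P' : F × F × F} {w : Fin r × F × F}
    (hne : Econ α P ≠ Econ α P') (h1 : w ∈ Econ α P) (h2 : w ∈ Econ α P') :
    P.1 ≠ P'.1 :=
  fun hd => hne (congrArg _ (P_eq_of h1 h2 hd))

lemma vertexAt_mem (α : Fin r → F) (P : F × F × F) (i : Fin r) :
    ((i, P.2.1 - α i * P.1, P.2.2 - α i * P.1 ^ 2) : Fin r × F × F) ∈ Econ α P := by
  rw [mem_Econ]
  exact ⟨rfl, rfl⟩

lemma Econ_injective (hr : 3 ≤ r) {α : Fin r → F} (hα : Function.Injective α) :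
    Function.Injective (Econ α) := by
  intro P P' h
  have h0 : ((⟨0, by omega⟩ : Fin r), P.2.1 - α ⟨0, by omega⟩ * P.1,
      P.2.2 - α ⟨0, by omega⟩ * P.1 ^ 2) ∈ Econ α P' := h ▸ vertexAt_mem α P _
  have h0' := h0
  have h1 : ((⟨1, by omega⟩ : Fin r), P.2.1 - α ⟨1, by omega⟩ * P.1,
      P.2.2 - α ⟨1, by omega⟩ * P.1 ^ 2) ∈ Econ α P' := h ▸ vertexAt_mem α P _
  rw [mem_Econ] at h0 h1
  have e0 := h0.1
  have e1 := h1.1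
  simp only at e0 e1
  have key : (α ⟨0, by omega⟩ - α ⟨1, by omega⟩) * (P.1 - P'.1) = 0 := by
    linear_combination e1 - e0
  have hne : α (⟨0, by omega⟩ : Fin r) - α ⟨1, by omega⟩ ≠ 0 := by
    refine sub_ne_zero_of_ne (hα.ne ?_)
    simp [Fin.ext_iff]
  have hd : P.1 = P'.1 := by
    rcases mul_eq_zero.mp key with h' | h'
    · exact absurd h' hne
    · exact sub_eq_zero.mp h'
  exact P_eq_of (vertexAt_mem α P ⟨0, by omega⟩) h0' hd

-- Linearity
lemma Econ_linear {α : Fin r → F} (hα : Function.Injective α) {P P' : F × F × F}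
    (hne : Econ α P ≠ Econ α P') : ((Econ α P) ∩ (Econ α P')).card ≤ 1 := by
  refine Finset.card_le_one.mpr fun w hw w' hw' => ?_
  simp only [Finset.mem_inter] at hw hw'
  by_contra hww
  -- layers must differ
  have hl : w.1 ≠ w'.1 := fun h => hww (layer_eq_of hw.1 hw'.1 h)
  have m1 := mem_Econ.mp hw.1
  have m2 := mem_Econ.mp hw.2
  have m3 := mem_Econ.mp hw'.1
  have m4 := mem_Econ.mp hw'.2
  have key : (α w.1 - α w'.1) * (P.1 - P'.1) = 0 := by
    linear_combination m1.1 - m2.1 + m4.1 - m3.1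
  rcases mul_eq_zero.mp key with h' | h'
  · exact (sub_ne_zero_of_ne (hα.ne hl)) h'
  · exact hne (congrArg _ (P_eq_of hw.1 hw.2 (sub_eq_zero.mp h')))

lemma no_triangle {α : Fin r → F} (hα : Function.Injective α) :
    ¬ BergeTriangle (Hcon α) := by
  rintro ⟨v1, v2, v3, e1, e2, e3, hv12, hv23, hv13, he12, he23, he13,
    m1, m2, m3, a11, a21, a22, a32, a33, a13⟩
  obtain ⟨P1, -, rfl⟩ := Finset.mem_image.mp m1
  obtain ⟨P2, -, rfl⟩ := Finset.mem_image.mp m2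
  obtain ⟨P3, -, rfl⟩ := Finset.mem_image.mp m3
  -- layers pairwise distinct
  have hl12 : v1.1 ≠ v2.1 := fun h => hv12 (layer_eq_of a11 a21 h)
  have hl23 : v2.1 ≠ v3.1 := fun h => hv23 (layer_eq_of a22 a32 h)
  have hl13 : v1.1 ≠ v3.1 := fun h => hv13 (layer_eq_of a13 a33 h)
  -- d-coordinates pairwise distinct
  have hd12 : P1.1 ≠ P2.1 := d_ne_of he12 a21 a22
  have hd23 : P2.1 ≠ P3.1 := d_ne_of he23 a32 a33
  have hd13 : P1.1 ≠ P3.1 := d_ne_of he13 a11 a13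
  -- membership equations
  have q11 := mem_Econ.mp a11
  have q21 := mem_Econ.mp a21
  have q22 := mem_Econ.mp a22
  have q32 := mem_Econ.mp a32
  have q33 := mem_Econ.mp a33
  have q13 := mem_Econ.mp a13
  have h1 : α v2.1 * (P1.1 - P2.1) + α v3.1 * (P2.1 - P3.1)
      + α v1.1 * (P3.1 - P1.1) = 0 := by
    linear_combination q21.1 - q22.1 + q32.1 - q33.1 + q13.1 - q11.1
  have h2 : α v2.1 * (P1.1 ^ 2 - P2.1 ^ 2) + α v3.1 * (P2.1 ^ 2 - P3.1 ^ 2)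
      + α v1.1 * (P3.1 ^ 2 - P1.1 ^ 2) = 0 := by
    linear_combination q21.2 - q22.2 + q32.2 - q33.2 + q13.2 - q11.2
  have key : (α v3.1 - α v2.1) * (P2.1 - P3.1) * (P2.1 - P1.1) = 0 := by
    linear_combination h2 - (P1.1 + P3.1) * h1
  rcases mul_eq_zero.mp key with h' | h'
  · rcases mul_eq_zero.mp h' with h'' | h''
    · exact (sub_ne_zero_of_ne (hα.ne hl23.symm)) h''
    · exact (sub_ne_zero_of_ne hd23) h''
  · exact (sub_ne_zero_of_ne hd12.symm) h'



lemma no_K2 (hr : 3 ≤ r) {α : Fin r → F} (hα : Function.Injective α)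
    (hchar : (2 : F) ≠ 0) : ¬ BergeK2 (2 * r - 3) (Hcon α) := by
  rintro ⟨x, y, v, e, f, hvinj, hxy, hxv, hyv, heH, hfH, heinj, hfinj, hef, hm⟩
  choose P hPm hP using fun m => Finset.mem_image.mp (heH m)
  choose Q hQm hQ using fun m => Finset.mem_image.mp (hfH m)
  clear hPm hQm
  have hxe : ∀ m, x ∈ Econ α (P m) := fun m => (hP m).symm ▸ (hm m).1
  have hve : ∀ m, v m ∈ Econ α (P m) := fun m => (hP m).symm ▸ (hm m).2.1
  have hyf : ∀ m, y ∈ Econ α (Q m) := fun m => (hQ m).symm ▸ (hm m).2.2.1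
  have hvf : ∀ m, v m ∈ Econ α (Q m) := fun m => (hQ m).symm ▸ (hm m).2.2.2
  have hki : ∀ m, (v m).1 ≠ x.1 :=
    fun m h => hxv m (layer_eq_of (hxe m) (hve m) h.symm)
  have hkj : ∀ m, (v m).1 ≠ y.1 :=
    fun m h => hyv m (layer_eq_of (hyf m) (hvf m) h.symm)
  have hEP : ∀ a b, a ≠ b → Econ α (P a) ≠ Econ α (P b) :=
    fun a b hab h => heinj.ne hab (((hP a).symm.trans h).trans (hP b))
  have hEQ : ∀ a b, a ≠ b → Econ α (Q a) ≠ Econ α (Q b) :=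
    fun a b hab h => hfinj.ne hab (((hQ a).symm.trans h).trans (hQ b))
  have hdP : ∀ a b, a ≠ b → (P a).1 ≠ (P b).1 :=
    fun a b hab => d_ne_of (hEP a b hab) (hxe a) (hxe b)
  have hdQ : ∀ a b, a ≠ b → (Q a).1 ≠ (Q b).1 :=
    fun a b hab => d_ne_of (hEQ a b hab) (hyf a) (hyf b)
  -- master equations
  have M1 : ∀ m, x.2.1 - y.2.1 =
      (α (v m).1 - α x.1) * (P m).1 - (α (v m).1 - α y.1) * (Q m).1 := by
    intro m
    have e1 := (mem_Econ.mp (hxe m)).1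
    have e2 := (mem_Econ.mp (hve m)).1
    have e3 := (mem_Econ.mp (hyf m)).1
    have e4 := (mem_Econ.mp (hvf m)).1
    linear_combination e1 - e2 - e3 + e4
  have M2 : ∀ m, x.2.2 - y.2.2 =
      (α (v m).1 - α x.1) * (P m).1 ^ 2 - (α (v m).1 - α y.1) * (Q m).1 ^ 2 := by
    intro m
    have e1 := (mem_Econ.mp (hxe m)).2
    have e2 := (mem_Econ.mp (hve m)).2
    have e3 := (mem_Econ.mp (hyf m)).2
    have e4 := (mem_Econ.mp (hvf m)).2
    linear_combination e1 - e2 - e3 + e4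
  have hκi : ∀ m, α (v m).1 - α x.1 ≠ 0 := fun m => sub_ne_zero_of_ne (hα.ne (hki m))
  have hκj : ∀ m, α (v m).1 - α y.1 ≠ 0 := fun m => sub_ne_zero_of_ne (hα.ne (hkj m))
  by_cases hij : x.1 = y.1
  · -- x and y in the same layer
    have hc : α x.1 = α y.1 := by rw [hij]
    have N1 : ∀ m, x.2.1 - y.2.1 = (α (v m).1 - α x.1) * ((P m).1 - (Q m).1) := by
      intro m
      linear_combination M1 m - (Q m).1 * hc
    have N2 : ∀ m, x.2.2 - y.2.2 =
        (α (v m).1 - α x.1) * ((P m).1 ^ 2 - (Q m).1 ^ 2) := by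
      intro m
      linear_combination M2 m - (Q m).1 ^ 2 * hc
    by_cases hD1 : x.2.1 - y.2.1 = 0
    · -- then x = y, contradiction
      have m0 : Fin (2 * r - 3) := ⟨0, by omega⟩
      have h0 : (α (v m0).1 - α x.1) * ((P m0).1 - (Q m0).1) = 0 := by
        rw [← N1 m0]; exact hD1
      have hPQ : (P m0).1 = (Q m0).1 := by
        rcases mul_eq_zero.mp h0 with h' | h'
        · exact absurd h' (hκi m0)
        · exact sub_eq_zero.mp h'
      have hD2 : x.2.2 - y.2.2 = 0 := by rw [N2 m0, hPQ]; ring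
      exact hxy (Prod.ext_iff.mpr ⟨hij, Prod.ext_iff.mpr
        ⟨sub_eq_zero.mp hD1, sub_eq_zero.mp hD2⟩⟩)
    · -- D1 ≠ 0 : the layer map is injective
      have hsum : ∀ m, (x.2.1 - y.2.1) * ((P m).1 + (Q m).1) = x.2.2 - y.2.2 := by
        intro m
        linear_combination ((P m).1 + (Q m).1) * N1 m - N2 m
      have hinj : Function.Injective fun m => (v m).1 := by
        intro a b hab
        simp only at hab
        by_contra hne
        have hκab : α (v b).1 = α (v a).1 := by rw [hab]
        have t1 : (α (v a).1 - α x.1) * (((P a).1 - (Q a).1) - ((P b).1 - (Q b).1)) = 0 := by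
          linear_combination N1 b - N1 a + ((P b).1 - (Q b).1) * hκab
        have t1' : (P a).1 - (Q a).1 = (P b).1 - (Q b).1 := by
          rcases mul_eq_zero.mp t1 with h' | h'
          · exact absurd h' (hκi a)
          · exact sub_eq_zero.mp h'
        have t2 : (x.2.1 - y.2.1) * (((P a).1 + (Q a).1) - ((P b).1 + (Q b).1)) = 0 := by
          linear_combination hsum a - hsum b
        have t2' : (P a).1 + (Q a).1 = (P b).1 + (Q b).1 := by
          rcases mul_eq_zero.mp t2 with h' | h'
          · exact absurd h' hD1
          · exact sub_eq_zero.mp h'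
        have t3 : (2 : F) * (P a).1 = (2 : F) * (P b).1 := by
          linear_combination t1' + t2'
        exact hdP a b hne (mul_left_cancel₀ hchar t3)
      have hmaps : ∀ m ∈ (Finset.univ : Finset (Fin (2 * r - 3))),
          (v m).1 ∈ Finset.univ.erase x.1 :=
        fun m _ => Finset.mem_erase.mpr ⟨hki m, Finset.mem_univ _⟩
      have hcard := Finset.card_le_card_of_injOn _ hmaps hinj.injOn
      rw [Finset.card_univ, Fintype.card_fin,
        Finset.card_erase_of_mem (Finset.mem_univ _), Finset.card_univ,
        Fintype.card_fin] at hcard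
      omega
  · -- x and y in different layers : each layer used at most twice
    have hβγ : α x.1 ≠ α y.1 := hα.ne hij
    have hfib : ∀ z, (Finset.univ.filter fun m => (v m).1 = z).card ≤ 2 := by
      intro z
      by_contra hgt
      push_neg at hgt
      obtain ⟨a, b, c, ha, hb, hc, hab, hac, hbc⟩ := Finset.two_lt_card_iff.mp hgt
      simp only [Finset.mem_filter, Finset.mem_univ, true_and] at ha hb hc
      have M1a := M1 a; rw [ha] at M1a
      have M2a := M2 a; rw [ha] at M2a
      have M1b := M1 b; rw [hb] at M1b
      have M2b := M2 b; rw [hb] at M2b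
      have M1c := M1 c; rw [hc] at M1c
      have M2c := M2 c; rw [hc] at M2c
      have hκβ : α z - α x.1 ≠ 0 := by rw [← ha]; exact hκi a
      have hκγ : α z - α y.1 ≠ 0 := by rw [← ha]; exact hκj a
      have hab1 : (α z - α x.1) * ((P a).1 - (P b).1)
          = (α z - α y.1) * ((Q a).1 - (Q b).1) := by linear_combination M1b - M1a
      have hab2 : (α z - α x.1) * ((P a).1 ^ 2 - (P b).1 ^ 2)
          = (α z - α y.1) * ((Q a).1 ^ 2 - (Q b).1 ^ 2) := by linear_combination M2b - M2a
      have hac1 : (α z - α x.1) * ((P a).1 - (P c).1)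
          = (α z - α y.1) * ((Q a).1 - (Q c).1) := by linear_combination M1c - M1a
      have hac2 : (α z - α x.1) * ((P a).1 ^ 2 - (P c).1 ^ 2)
          = (α z - α y.1) * ((Q a).1 ^ 2 - (Q c).1 ^ 2) := by linear_combination M2c - M2a
      have hbc1 : (α z - α x.1) * ((P b).1 - (P c).1)
          = (α z - α y.1) * ((Q b).1 - (Q c).1) := by linear_combination M1c - M1b
      have hSab : (Q a).1 + (Q b).1 = (P a).1 + (P b).1 := by
        have hQab : (α z - α y.1) * ((Q a).1 - (Q b).1) ≠ 0 := by
          rw [← hab1]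
          exact mul_ne_zero hκβ (sub_ne_zero_of_ne (hdP a b hab))
        have key : ((α z - α y.1) * ((Q a).1 - (Q b).1))
            * (((Q a).1 + (Q b).1) - ((P a).1 + (P b).1)) = 0 := by
          linear_combination ((P a).1 + (P b).1) * hab1 - hab2
        rcases mul_eq_zero.mp key with h' | h'
        · exact absurd h' hQab
        · exact sub_eq_zero.mp h'
      have hSac : (Q a).1 + (Q c).1 = (P a).1 + (P c).1 := by
        have hQac : (α z - α y.1) * ((Q a).1 - (Q c).1) ≠ 0 := by
          rw [← hac1]
          exact mul_ne_zero hκβ (sub_ne_zero_of_ne (hdP a c hac))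
        have key : ((α z - α y.1) * ((Q a).1 - (Q c).1))
            * (((Q a).1 + (Q c).1) - ((P a).1 + (P c).1)) = 0 := by
          linear_combination ((P a).1 + (P c).1) * hac1 - hac2
        rcases mul_eq_zero.mp key with h' | h'
        · exact absurd h' hQac
        · exact sub_eq_zero.mp h'
      have hSdiff : (Q b).1 - (Q c).1 = (P b).1 - (P c).1 := by
        linear_combination hSab - hSac
      have final : (α y.1 - α x.1) * ((P b).1 - (P c).1) = 0 := by
        linear_combination hbc1 + (α z - α y.1) * hSdiff
      rcases mul_eq_zero.mp final with h' | h'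
      · exact (sub_ne_zero_of_ne (Ne.symm hβγ)) h'
      · exact (sub_ne_zero_of_ne (hdP b c hbc)) h'
    have himg : (Finset.univ.image fun m => (v m).1)
        ⊆ (Finset.univ.erase y.1).erase x.1 := by
      intro z hz
      obtain ⟨m, -, rfl⟩ := Finset.mem_image.mp hz
      exact Finset.mem_erase.mpr ⟨hki m, Finset.mem_erase.mpr ⟨hkj m, Finset.mem_univ _⟩⟩
    have hcard1 := Finset.card_le_mul_card_image
      (Finset.univ : Finset (Fin (2 * r - 3))) 2 (fun z _ => hfib z)
    have hcard2 := Finset.card_le_card himg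
    rw [Finset.card_erase_of_mem (Finset.mem_erase.mpr ⟨hij, Finset.mem_univ _⟩),
      Finset.card_erase_of_mem (Finset.mem_univ _), Finset.card_univ,
      Fintype.card_fin] at hcard2
    rw [Finset.card_univ, Fintype.card_fin] at hcard1
    omega



end Construction

section Transfer
variable {V W : Type*} [DecidableEq V] [DecidableEq W]

lemma pull_mem (σ : V ≃ W) {s : Finset V} {w : W} (h : w ∈ s.image σ) :
    σ.symm w ∈ s := by
  obtain ⟨a, ha, rfl⟩ := Finset.mem_image.mp h
  simpa using ha

lemma bergeTriangle_of_image (σ : V ≃ W) (H : Finset (Finset V))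
    (h : BergeTriangle (H.image fun s => s.image σ)) : BergeTriangle H := by
  obtain ⟨v1, v2, v3, e1, e2, e3, h12, h23, h13, g12, g23, g13,
    m1, m2, m3, a1, a2, a3, a4, a5, a6⟩ := h
  obtain ⟨s1, hs1, rfl⟩ := Finset.mem_image.mp m1
  obtain ⟨s2, hs2, rfl⟩ := Finset.mem_image.mp m2
  obtain ⟨s3, hs3, rfl⟩ := Finset.mem_image.mp m3
  exact ⟨σ.symm v1, σ.symm v2, σ.symm v3, s1, s2, s3,
    σ.symm.injective.ne h12, σ.symm.injective.ne h23, σ.symm.injective.ne h13,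
    fun h => g12 (by rw [h]), fun h => g23 (by rw [h]), fun h => g13 (by rw [h]),
    hs1, hs2, hs3, pull_mem σ a1, pull_mem σ a2, pull_mem σ a3,
    pull_mem σ a4, pull_mem σ a5, pull_mem σ a6⟩

lemma bergeK2_of_image (σ : V ≃ W) (t : ℕ) (H : Finset (Finset V))
    (h : BergeK2 t (H.image fun s => s.image σ)) : BergeK2 t H := by
  obtain ⟨x, y, v, e, f, hv, hxy, hxv, hyv, he, hf, hei, hfi, hef, hm⟩ := h
  choose se hse1 hse2 using fun m => Finset.mem_image.mp (he m)
  choose sf hsf1 hsf2 using fun m => Finset.mem_image.mp (hf m)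
  refine ⟨σ.symm x, σ.symm y, fun m => σ.symm (v m), se, sf,
    fun a b hab => hv (σ.symm.injective hab), σ.symm.injective.ne hxy,
    fun i => σ.symm.injective.ne (hxv i), fun i => σ.symm.injective.ne (hyv i),
    hse1, hsf1,
    fun a b hab => hei (by rw [← hse2 a, ← hse2 b, hab]),
    fun a b hab => hfi (by rw [← hsf2 a, ← hsf2 b, hab]),
    fun a b hab => hef a b (by rw [← hse2 a, ← hsf2 b, hab]),
    fun i => ⟨pull_mem σ ((hse2 i).symm ▸ (hm i).1),
      pull_mem σ ((hse2 i).symm ▸ (hm i).2.1),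
      pull_mem σ ((hsf2 i).symm ▸ (hm i).2.2.1),
      pull_mem σ ((hsf2 i).symm ▸ (hm i).2.2.2)⟩⟩

end Transfer

lemma numeric_part (r q : ℕ) (hr : 3 ≤ r) :
    (q : ℝ) ^ 2 * ((q : ℝ) - 1) ≥
      ((r * q ^ 2 : ℕ) : ℝ) ^ ((3 : ℝ) / 2) / (r : ℝ) ^ ((3 : ℝ) / 2)
        - ((r * q ^ 2 : ℕ) : ℝ) / r := by
  have hr0 : (0 : ℝ) < (r : ℝ) := by
    have : 0 < r := by omega
    exact_mod_cast this
  have hq0 : (0 : ℝ) ≤ (q : ℝ) := Nat.cast_nonneg q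
  have hcast : ((r * q ^ 2 : ℕ) : ℝ) = (r : ℝ) * (q : ℝ) ^ 2 := by push_cast; ring
  rw [hcast]
  have h2 : ((r : ℝ) * (q : ℝ) ^ 2) ^ ((3 : ℝ) / 2)
      = (r : ℝ) ^ ((3 : ℝ) / 2) * ((q : ℝ) ^ 2) ^ ((3 : ℝ) / 2) :=
    Real.mul_rpow hr0.le (by positivity)
  have h3 : ((q : ℝ) ^ 2) ^ ((3 : ℝ) / 2) = (q : ℝ) ^ 3 := by
    rw [← Real.rpow_natCast (q : ℝ) 2, ← Real.rpow_mul hq0,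
      show ((2 : ℕ) : ℝ) * ((3 : ℝ) / 2) = ((3 : ℕ) : ℝ) by norm_num,
      Real.rpow_natCast]
  have hrne : (r : ℝ) ^ ((3 : ℝ) / 2) ≠ 0 := ne_of_gt (Real.rpow_pos_of_pos hr0 _)
  rw [h2, h3, mul_div_cancel_left₀ _ hrne, mul_div_cancel_left₀ _ (ne_of_gt hr0)]
  exact le_of_eq (by ring)


/-- For `q ≥ r ≥ 3` with `q` a power of an odd prime and `n = rq²`, there is an
`n`-vertex `r`-uniform linear hypergraph with no Berge-C₃ and no Berge-K_{2,2r-3}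
having at least `q²(q-1) ≥ n^{3/2}/r^{3/2} - n/r` edges. -/
theorem stmt_19 (r q : ℕ) (hr : 3 ≤ r) (hqr : r ≤ q)
    (hq : ∃ p k : ℕ, p.Prime ∧ Odd p ∧ 0 < k ∧ q = p ^ k) :
    (∃ H : Finset (Finset (Fin (r * q ^ 2))),
      (∀ e ∈ H, e.card = r) ∧
      (∀ e ∈ H, ∀ f ∈ H, e ≠ f → (e ∩ f).card ≤ 1) ∧
      ¬ BergeTriangle H ∧
      ¬ BergeK2 (2 * r - 3) H ∧
      q ^ 2 * (q - 1) ≤ H.card) ∧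
    ((q : ℝ) ^ 2 * ((q : ℝ) - 1) ≥
      ((r * q ^ 2 : ℕ) : ℝ) ^ ((3 : ℝ) / 2) / (r : ℝ) ^ ((3 : ℝ) / 2)
        - ((r * q ^ 2 : ℕ) : ℝ) / r) := by
  obtain ⟨p, kk, hp, hodd, hkpos, hqe⟩ := hq
  haveI := Fact.mk hp
  haveI : Fintype (GaloisField p kk) := Fintype.ofFinite _
  haveI : DecidableEq (GaloisField p kk) := Classical.decEq _
  have hFcard : Fintype.card (GaloisField p kk) = q := by
    rw [← Nat.card_eq_fintype_card, GaloisField.card p kk (by omega), hqe]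
  have hchar2 : (2 : GaloisField p kk) ≠ 0 := by
    intro h
    have h2 : ((2 : ℕ) : GaloisField p kk) = 0 := by exact_mod_cast h
    have hdvd := (CharP.cast_eq_zero_iff (GaloisField p kk) p 2).mp h2
    have hp2 : p = 2 := (Nat.prime_dvd_prime_iff_eq hp Nat.prime_two).mp hdvd
    rw [hp2, Nat.odd_iff] at hodd
    omega
  let ψ : Fin q ≃ GaloisField p kk := (Fintype.equivFinOfCardEq hFcard).symm
  let α : Fin r → GaloisField p kk := fun m => ψ ⟨m.1, lt_of_lt_of_le m.2 hqr⟩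
  have hα : Function.Injective α := by
    intro a b hab
    have h1 := ψ.injective hab
    rw [Fin.mk.injEq] at h1
    exact Fin.ext h1
  have hVcard : Fintype.card (Fin r × GaloisField p kk × GaloisField p kk)
      = r * q ^ 2 := by
    rw [Fintype.card_prod, Fintype.card_prod, Fintype.card_fin, hFcard]; ring
  let σ : (Fin r × GaloisField p kk × GaloisField p kk) ≃ Fin (r * q ^ 2) :=
    Fintype.equivFinOfCardEq hVcard
  constructor
  · refine ⟨(Hcon α).image (fun s => s.image σ), ?_, ?_, ?_, ?_, ?_⟩
    · intro e he
      obtain ⟨s, hs, rfl⟩ := Finset.mem_image.mp he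
      rw [Finset.card_image_of_injective _ σ.injective]
      obtain ⟨P, -, rfl⟩ := Finset.mem_image.mp hs
      exact card_Econ α P
    · intro e he f hf hef
      obtain ⟨s, hs, rfl⟩ := Finset.mem_image.mp he
      obtain ⟨t, ht, rfl⟩ := Finset.mem_image.mp hf
      have hst : s ≠ t := fun h => hef (by rw [h])
      rw [← Finset.image_inter _ _ σ.injective,
        Finset.card_image_of_injective _ σ.injective]
      obtain ⟨P, -, rfl⟩ := Finset.mem_image.mp hs
      obtain ⟨P', -, rfl⟩ := Finset.mem_image.mp ht
      exact Econ_linear hα hst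
    · exact fun h => no_triangle hα (bergeTriangle_of_image σ _ h)
    · exact fun h => no_K2 hr hα hchar2 (bergeK2_of_image σ _ _ h)
    · rw [Finset.card_image_of_injective _ (Finset.image_injective σ.injective),
        Hcon, Finset.card_image_of_injective _ (Econ_injective hr hα),
        Finset.card_univ]
      have hc3 : Fintype.card
          (GaloisField p kk × GaloisField p kk × GaloisField p kk) = q ^ 3 := by
        rw [Fintype.card_prod, Fintype.card_prod, hFcard]; ring
      rw [hc3]
      calc q ^ 2 * (q - 1) ≤ q ^ 2 * q := Nat.mul_le_mul_left _ (Nat.sub_le q 1)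
        _ = q ^ 3 := by ring
  · exact numeric_part r q hr
end
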